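/- arXiv:1606.06570 — 2 statements merged into one kernel-verified Lean document; each statement's English description precedes it below -/
import Mathlib

section
/- With masking registers, each additional round strictly increases computational power: for every r ∈ N, Fun_M^r ⊊ Fun_M^{r+1}. In particular, for r ≥ 2, the metastability-containing r-fold fan-out f : BM → Pow(BM^r) defined by f(x) = {x^r} for x ∈ {0,1} and f(M) = ⋃_{i ∈ [r]} ResM(0^i M 1^{r−i−1}) satisfies f ∈ Fun_M^r and f ∉ Fun_M^{r−1}. -/
set_option linter.unusedVariables false

attribute [local instance] Classical.propDecidable

/-- Signal values: stable `zero`, `one`, and metastable `meta`. -/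
inductive BM : Type
  | zero
  | one
  | metastable
  deriving DecidableEq

/-- Embedding of stable Boolean values into `BM`. -/
def BM.ofBool : Bool → BM
  | false => BM.zero
  | true => BM.one

/-- `inResM x y` means `y ∈ ResM(x)`, the set of partial resolutions of `x`. -/
def inResM {k : ℕ} (x y : Fin k → BM) : Prop :=
  ∀ i, x i = y i ∨ x i = BM.metastable

/-- `inRes x y` means `y ∈ Res(x)`, i.e. `y` is a complete (stable) resolution of `x`. -/
def inRes {k : ℕ} (x y : Fin k → BM) : Prop :=
  inResM x y ∧ ∀ i, y i ≠ BM.metastable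

/-- The complete resolutions of `x`, viewed as Boolean words. -/
def boolRes {k : ℕ} (x : Fin k → BM) : Set (Fin k → Bool) :=
  { z | ∀ i, x i = BM.ofBool (z i) ∨ x i = BM.metastable }

/-- The metastable (Kleene) extension `f_M : BM^k → BM` of a Boolean function
`f : B^k → B`: it outputs a stable value `b` iff all complete resolutions of the
input evaluate to `b` under `f`, and `meta` otherwise. -/
noncomputable def kleene {k : ℕ} (f : (Fin k → Bool) → Bool) (x : Fin k → BM) : BM :=
  if ∀ z ∈ boolRes x, f z = false then BM.zero
  else if ∀ z ∈ boolRes x, f z = true then BM.one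
  else BM.metastable

/-- Combinational logic with `m` input nodes: formulas built from inputs,
`BM`-constants (gates of indegree 0), and gates computing the metastable extension
of a Boolean function of their in-neighbors.  (A DAG evaluates exactly like the
formula obtained by unsharing, so this faithfully captures evaluation of
combinational logic DAGs.) -/
inductive Comb (m : ℕ) : Type
  | input : Fin m → Comb m
  | const : BM → Comb m
  | gate : (j : ℕ) → ((Fin j → Bool) → Bool) → (Fin j → Comb m) → Comb m

/-- Recursive evaluation of combinational logic on input `x ∈ BM^m`. -/
noncomputable def Comb.eval {m : ℕ} (x : Fin m → BM) : Comb m → BM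
  | .input i => x i
  | .const b => b
  | .gate _ f cs => kleene f (fun t => (cs t).eval x)

/-- Register types: simple, mask-0, mask-1. -/
inductive RegType : Type
  | simple
  | mask0
  | mask1
  deriving DecidableEq

/-- `regRead t b (o, b')` holds iff a register of type `t` in state `b` can be read
with read value `o`, moving to state `b'`:  a register in a stable state yields that
state and keeps it; a simple register in state `meta` yields `meta` and stays `meta`;
a mask-`c` register in state `meta` either yields `c` staying in state `meta`, or
yields `meta` changing its state to `1 - c`. -/
def regRead : RegType → BM → BM × BM → Prop
  | _, BM.zero, p => p = (BM.zero, BM.zero)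
  | _, BM.one, p => p = (BM.one, BM.one)
  | RegType.simple, BM.metastable, p => p = (BM.metastable, BM.metastable)
  | RegType.mask0, BM.metastable, p => p = (BM.zero, BM.metastable) ∨ p = (BM.metastable, BM.one)
  | RegType.mask1, BM.metastable, p => p = (BM.one, BM.metastable) ∨ p = (BM.metastable, BM.zero)

/-- A circuit with `m` input, `k` local and `n` output registers: a type for each
register, combinational logic with `m + k` input nodes (one per non-output register)
and `k + n` output nodes (one per non-input register), and an initialization of the
non-input registers. -/
structure Circuit (m k n : ℕ) : Type where
  inType : Fin m → RegType
  locType : Fin k → RegType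
  outType : Fin n → RegType
  logic : Fin (k + n) → Comb (m + k)
  init : Fin (k + n) → BM

/-- A state of a circuit: values of input, local, and output registers. -/
structure CState (m k n : ℕ) : Type where
  inp : Fin m → BM
  loc : Fin k → BM
  out : Fin n → BM

/-- A state as a word in `BM^{m+k+n}`. -/
def CState.toVec {m k n : ℕ} (s : CState m k n) : Fin (m + (k + n)) → BM :=
  Fin.append s.inp (Fin.append s.loc s.out)

/-- Read phase: `o ∈ BM^{m+k}` are possible read values of the non-output registers
in state `s`, and `ι'` the corresponding successor states of the input registers. -/
def ReadRel {m k n : ℕ} (C : Circuit m k n) (s : CState m k n)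
    (o : Fin (m + k) → BM) (ι' : Fin m → BM) : Prop :=
  (∀ i : Fin m, regRead (C.inType i) (s.inp i) (o (Fin.castAdd k i), ι' i)) ∧
  (∀ j : Fin k, ∃ st', regRead (C.locType j) (s.loc j) (o (Fin.natAdd m j), st'))

/-- Evaluation phase: `f^G` applied to the read values. -/
noncomputable def evalLogic {m k n : ℕ} (C : Circuit m k n) (o : Fin (m + k) → BM) :
    Fin (k + n) → BM :=
  fun j => (C.logic j).eval o

/-- `Write^C(s)`: possible values written to the non-input registers. -/
def WriteSet {m k n : ℕ} (C : Circuit m k n) (s : CState m k n) :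
    Set (Fin (k + n) → BM) :=
  { w | ∃ o ι', ReadRel C s o ι' ∧ inResM (evalLogic C o) w }

/-- Successor-state relation: read all non-output registers, evaluate the logic,
and write an arbitrary partial resolution of the result to the non-input registers. -/
def Succ {m k n : ℕ} (C : Circuit m k n) (s s' : CState m k n) : Prop :=
  ∃ o ι', ReadRel C s o ι' ∧ s'.inp = ι' ∧
    inResM (evalLogic C o) (Fin.append s'.loc s'.out)

/-- `reach C r s₀ = S^C_r(s₀)`: states reachable in `r` rounds from `s₀`. -/
def reach {m k n : ℕ} (C : Circuit m k n) : ℕ → CState m k n → Set (CState m k n)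
  | 0, s => {s}
  | r + 1, s => { t | ∃ u ∈ reach C r s, Succ C u t }

/-- The initial state of `C` with input `ι`. -/
def initState {m k n : ℕ} (C : Circuit m k n) (ι : Fin m → BM) : CState m k n :=
  ⟨ι, fun j => C.init (Fin.castAdd n j), fun j => C.init (Fin.natAdd k j)⟩

/-- `C_r(ι)`: possible outputs after `r` rounds on input `ι`. -/
def Cout {m k n : ℕ} (C : Circuit m k n) (r : ℕ) (ι : Fin m → BM) :
    Set (Fin n → BM) :=
  { y | ∃ s ∈ reach C r (initState C ι), y = s.out }

/-- `r` rounds of `C` implement `f` iff `C_r(ι) ⊆ f(ι)` for all inputs `ι`. -/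
def Implements {m k n : ℕ} (C : Circuit m k n) (r : ℕ)
    (f : (Fin m → BM) → Set (Fin n → BM)) : Prop :=
  ∀ ι, Cout C r ι ⊆ f ι

/-- All registers of the circuit are simple. -/
def OnlySimple {m k n : ℕ} (C : Circuit m k n) : Prop :=
  (∀ i, C.inType i = RegType.simple) ∧ (∀ j, C.locType j = RegType.simple) ∧
    (∀ j, C.outType j = RegType.simple)

/-- `Fun_S^r`: functions implementable by `r` rounds of circuits with only simple
registers. -/
def FunS (r m n : ℕ) : Set ((Fin m → BM) → Set (Fin n → BM)) :=
  { f | ∃ k, ∃ C : Circuit m k n, OnlySimple C ∧ Implements C r f }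

/-- `Fun_M^r`: functions implementable by `r` rounds of circuits with arbitrary
register types. -/
def FunM (r m n : ℕ) : Set ((Fin m → BM) → Set (Fin n → BM)) :=
  { f | ∃ k, ∃ C : Circuit m k n, Implements C r f }

/-- A pivotal sequence over `BM^N`: consecutive elements differ in exactly one bit,
and that bit is `meta` in one of the two elements. -/
def PivotalSeq {N ℓ : ℕ} (x : Fin (ℓ + 1) → Fin N → BM) : Prop :=
  ∀ i : Fin ℓ,
    ∃ j : Fin N,
      x i.castSucc j ≠ x i.succ j ∧
      (x i.castSucc j = BM.metastable ∨ x i.succ j = BM.metastable) ∧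
      ∀ j' : Fin N, x i.castSucc j' ≠ x i.succ j' → j' = j

/-- A function `f : BM^m → Pow(BM^n)` is natural iff it is bit-wise and closed
(a product of component functions each taking values in `{{0}, {1}, BM}`)
and specific (stabilizing the input restricts the output). -/
def IsNatural {m n : ℕ} (f : (Fin m → BM) → Set (Fin n → BM)) : Prop :=
  (∃ g : Fin n → (Fin m → BM) → Set BM,
      (∀ i x, g i x = {BM.zero} ∨ g i x = {BM.one} ∨ g i x = (Set.univ : Set BM)) ∧
      (∀ x, f x = { y | ∀ i, y i ∈ g i x })) ∧
  (∀ x y, inRes x y → f y ⊆ f x)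

/-- The `i`-th component of the metastable closure of `f : B^m → B^n`. -/
noncomputable def mclosureC {m n : ℕ} (f : (Fin m → Bool) → Fin n → Bool)
    (x : Fin m → BM) (i : Fin n) : Set BM :=
  if ∀ z ∈ boolRes x, f z i = false then {BM.zero}
  else if ∀ z ∈ boolRes x, f z i = true then {BM.one}
  else Set.univ

/-- The metastable closure `[f]_M : BM^m → Pow(BM^n)` of `f : B^m → B^n`. -/
noncomputable def mclosure {m n : ℕ} (f : (Fin m → Bool) → Fin n → Bool)
    (x : Fin m → BM) : Set (Fin n → BM) :=
  { y | ∀ i, y i ∈ mclosureC f x i }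

/-- `Fun_M^r` as a class of functions of arbitrary arities. -/
def FunMAll (r : ℕ) : Set ((m : ℕ) × (n : ℕ) × ((Fin m → BM) → Set (Fin n → BM))) :=
  { F | ∃ k, ∃ C : Circuit F.1 k F.2.1, Implements C r F.2.2 }

/-- The word `0^i M 1^{r-i-1} ∈ BM^r`. -/
def fanoutWord (r i : ℕ) : Fin r → BM := fun j =>
  if (j : ℕ) < i then BM.zero else if (j : ℕ) = i then BM.metastable else BM.one

/-- The metastability-containing `r`-fold fan-out: `f(x) = {x^r}` for stable `x`,
and `f(M) = ⋃_{i ∈ [r]} ResM(0^i M 1^{r-i-1})`. -/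
def fanout (r : ℕ) : (Fin 1 → BM) → Set (Fin r → BM) := fun x =>
  match x 0 with
  | BM.metastable => { y | ∃ i : Fin r, inResM (fanoutWord r (i : ℕ)) y }
  | b => { fun _ => b }


/-! ### Auxiliary infrastructure: the information order on `BM` -/

/-- Information order: `meta` is below everything, stable values only below themselves. -/
def ble (a b : BM) : Prop := a = BM.metastable ∨ a = b

lemma ble_refl (a : BM) : ble a a := Or.inr rfl

lemma ble_meta (b : BM) : ble BM.metastable b := Or.inl rfl

lemma ble_trans {a b c : BM} (h1 : ble a b) (h2 : ble b c) : ble a c := by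
  rcases h1 with h1 | h1
  · exact Or.inl h1
  · subst h1; exact h2

lemma ble_stable {a b : BM} (ha : a ≠ BM.metastable) (h : ble a b) : b = a := by
  rcases h with h | h
  · exact absurd h ha
  · exact h.symm

lemma ble_zero {a : BM} (h : ble BM.zero a) : a = BM.zero := ble_stable (by simp) h
lemma ble_one {a : BM} (h : ble BM.one a) : a = BM.one := ble_stable (by simp) h

/-- Pointwise information order on words. -/
def vle {N : ℕ} (x y : Fin N → BM) : Prop := ∀ i, ble (x i) (y i)

lemma vle_refl {N : ℕ} (x : Fin N → BM) : vle x x := fun i => ble_refl _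

lemma vle_trans {N : ℕ} {x y z : Fin N → BM} (h1 : vle x y) (h2 : vle y z) : vle x z :=
  fun i => ble_trans (h1 i) (h2 i)

lemma inResM_iff_vle {N : ℕ} (x y : Fin N → BM) : inResM x y ↔ vle x y := by
  constructor <;> exact fun h i => (h i).symm

lemma inResM_refl {N : ℕ} (x : Fin N → BM) : inResM x x := fun i => Or.inl rfl

/-! ### Monotonicity of combinational logic -/

lemma boolRes_anti {N : ℕ} {x y : Fin N → BM} (h : vle x y) : boolRes y ⊆ boolRes x := by
  intro z hz i
  rcases h i with h' | h'
  · exact Or.inr h'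
  · rw [h']; exact hz i

/-- A canonical complete resolution. -/
def resolveWith {N : ℕ} (x : Fin N → BM) (b : Bool) : Fin N → Bool :=
  fun i => match x i with | BM.zero => false | BM.one => true | BM.metastable => b

lemma resolveWith_mem {N : ℕ} (x : Fin N → BM) (b : Bool) : resolveWith x b ∈ boolRes x := by
  intro i; unfold resolveWith; cases h : x i <;> simp [BM.ofBool, h]

lemma kleene_mono {N : ℕ} (f : (Fin N → Bool) → Bool) {x y : Fin N → BM} (h : vle x y) :
    ble (kleene f x) (kleene f y) := by
  unfold kleene
  by_cases h0 : ∀ z ∈ boolRes x, f z = false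
  · rw [if_pos h0, if_pos (fun z hz => h0 z (boolRes_anti h hz))]; exact ble_refl _
  · rw [if_neg h0]
    by_cases h1 : ∀ z ∈ boolRes x, f z = true
    · rw [if_pos h1]
      have h1' : ∀ z ∈ boolRes y, f z = true := fun z hz => h1 z (boolRes_anti h hz)
      have h0' : ¬ ∀ z ∈ boolRes y, f z = false := by
        intro hc
        have hm := resolveWith_mem y true
        have := h1' _ hm; have := hc _ hm; simp_all
      rw [if_neg h0', if_pos h1']; exact ble_refl _
    · rw [if_neg h1]; exact ble_meta _

lemma Comb.eval_mono {N : ℕ} {x y : Fin N → BM} (h : vle x y) :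
    ∀ c : Comb N, ble (c.eval x) (c.eval y)
  | .input i => h i
  | .const b => ble_refl _
  | .gate j f cs => by
      have ih : ∀ t : Fin j, ble ((cs t).eval x) ((cs t).eval y) :=
        fun t => Comb.eval_mono h (cs t)
      exact kleene_mono f ih

lemma evalLogic_mono {m k n : ℕ} (C : Circuit m k n) {o o' : Fin (m + k) → BM}
    (h : vle o o') : vle (evalLogic C o) (evalLogic C o') :=
  fun j => Comb.eval_mono h (C.logic j)


/-! ### Register reading helpers -/

/-- Reading a register with read value equal to its state is always possible. -/
lemma regRead_self (τ : RegType) (a : BM) : ∃ st', regRead τ a (a, st') := by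
  cases τ <;> cases a <;> simp [regRead]

lemma regRead_stable {τ : RegType} {a : BM} (ha : a ≠ BM.metastable) {p : BM × BM}
    (h : regRead τ a p) : p = (a, a) := by
  cases τ <;> cases a <;> simp_all [regRead]

lemma regRead_read_ble {τ : RegType} {a : BM} {x st' : BM} (h : regRead τ a (x, st')) :
    ble a x := by
  cases a with
  | metastable => exact ble_meta _
  | zero => have h' := regRead_stable (by simp) h; injection h' with h1 _; rw [h1]; exact ble_refl _
  | one => have h' := regRead_stable (by simp) h; injection h' with h1 _; rw [h1]; exact ble_refl _

/-- Simulation of a read from a less-defined register state. -/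
lemma regRead_sim {τ : RegType} {a b : BM} (hab : ble a b) {x st : BM}
    (h : regRead τ b (x, st)) : ∃ x' st', regRead τ a (x', st') ∧ ble x' x ∧ ble st' st := by
  rcases hab with ha | ha
  · subst ha
    by_cases hb : b = BM.metastable
    · subst hb; exact ⟨x, st, h, ble_refl _, ble_refl _⟩
    · cases b with
      | metastable => exact absurd rfl hb
      | zero =>
          have h' := regRead_stable hb h
          injection h' with h1 h2; subst h1; subst h2
          cases τ with
          | simple => exact ⟨BM.metastable, BM.metastable, by simp [regRead], ble_meta _, ble_meta _⟩
          | mask0 => exact ⟨BM.zero, BM.metastable, Or.inl rfl, ble_refl _, ble_meta _⟩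
          | mask1 => exact ⟨BM.metastable, BM.zero, Or.inr rfl, ble_meta _, ble_refl _⟩
      | one =>
          have h' := regRead_stable hb h
          injection h' with h1 h2; subst h1; subst h2
          cases τ with
          | simple => exact ⟨BM.metastable, BM.metastable, by simp [regRead], ble_meta _, ble_meta _⟩
          | mask0 => exact ⟨BM.metastable, BM.one, Or.inr rfl, ble_meta _, ble_refl _⟩
          | mask1 => exact ⟨BM.one, BM.metastable, Or.inl rfl, ble_refl _, ble_meta _⟩
  · subst ha; exact ⟨x, st, h, ble_refl _, ble_refl _⟩

/-! ### Successor and reachability helpers -/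

/-- Information order on circuit states. -/
def sle {m k n : ℕ} (s t : CState m k n) : Prop :=
  vle s.inp t.inp ∧ vle s.loc t.loc ∧ vle s.out t.out

lemma sle_refl {m k n : ℕ} (s : CState m k n) : sle s s :=
  ⟨vle_refl _, vle_refl _, vle_refl _⟩

/-- Build a state from input part and a combined non-input word. -/
def mkW {m k n : ℕ} (ι : Fin m → BM) (w : Fin (k + n) → BM) : CState m k n :=
  ⟨ι, fun j => w (Fin.castAdd n j), fun j => w (Fin.natAdd k j)⟩

lemma mkW_append {m k n : ℕ} (ι : Fin m → BM) (w : Fin (k + n) → BM) :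
    Fin.append (mkW (m := m) ι w).loc (mkW (m := m) ι w).out = w := by
  funext i
  refine Fin.addCases (fun j => ?_) (fun j => ?_) i
  · rw [Fin.append_left]; rfl
  · rw [Fin.append_right]; rfl

lemma append_loc_out_castAdd {m k n : ℕ} (s : CState m k n) (j : Fin k) :
    Fin.append s.loc s.out (Fin.castAdd n j) = s.loc j := Fin.append_left _ _ _

lemma append_loc_out_natAdd {m k n : ℕ} (s : CState m k n) (j : Fin n) :
    Fin.append s.loc s.out (Fin.natAdd k j) = s.out j := Fin.append_right _ _ _

/-- Every state has a successor. -/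
lemma succ_exists {m k n : ℕ} (C : Circuit m k n) (s : CState m k n) :
    ∃ s', Succ C s s' := by
  classical
  choose ist hist using fun i : Fin m => regRead_self (C.inType i) (s.inp i)
  refine ⟨mkW ist (evalLogic C (Fin.append s.inp s.loc)), Fin.append s.inp s.loc, ist, ⟨?_, ?_⟩, rfl, ?_⟩
  · intro i; rw [Fin.append_left]; exact hist i
  · intro j; rw [Fin.append_right]; exact regRead_self _ _
  · rw [mkW_append]; exact inResM_refl _

lemma reach_nonempty {m k n : ℕ} (C : Circuit m k n) (t : ℕ) (s0 : CState m k n) :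
    ∃ s, s ∈ reach C t s0 := by
  induction t with
  | zero => exact ⟨s0, rfl⟩
  | succ t ih =>
      obtain ⟨s, hs⟩ := ih
      obtain ⟨s', hs'⟩ := succ_exists C s
      exact ⟨s', s, hs, hs'⟩

/-- Monotone simulation: a less-defined state can simulate any step, matching
the written registers exactly. -/
lemma succ_sim {m k n : ℕ} (C : Circuit m k n) {s t t' : CState m k n}
    (hst : sle s t) (h : Succ C t t') :
    ∃ s', Succ C s s' ∧ vle s'.inp t'.inp ∧ s'.loc = t'.loc ∧ s'.out = t'.out := by
  classical
  obtain ⟨o, ι', ⟨hin, hloc⟩, hι, hw⟩ := h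
  -- simulated reads
  choose xin stin hxin hxble hstble using
    fun i : Fin m => regRead_sim (hst.1 i) (hin i)
  have hsim : ∀ j : Fin k, ∃ x' st', regRead (C.locType j) (s.loc j) (x', st') ∧
      ble x' (o (Fin.natAdd m j)) ∧ ble st' st' :=
    fun j => by
      obtain ⟨st', hst'⟩ := hloc j
      obtain ⟨x', st'', hr, hb1, hb2⟩ := regRead_sim (hst.2.1 j) hst'
      exact ⟨x', st'', hr, hb1, ble_refl _⟩
  choose xloc stloc hxloc hxble2 _ using hsim
  set o' : Fin (m + k) → BM := Fin.append xin xloc with ho'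
  have hvle : vle o' o := by
    intro i
    refine Fin.addCases (fun i0 => ?_) (fun j0 => ?_) i
    · rw [ho', Fin.append_left]; exact hxble i0
    · rw [ho', Fin.append_right]; exact hxble2 j0
  refine ⟨⟨stin, t'.loc, t'.out⟩, ⟨o', stin, ⟨?_, ?_⟩, rfl, ?_⟩, ?_, rfl, rfl⟩
  · intro i; rw [ho', Fin.append_left]; exact hxin i
  · intro j; rw [ho', Fin.append_right]; exact ⟨stloc j, hxloc j⟩
  · rw [inResM_iff_vle] at hw ⊢
    exact vle_trans (evalLogic_mono C hvle) hw
  · intro i; rw [hι]; exact hstble i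

lemma sle_of_parts {m k n : ℕ} {s' t' : CState m k n}
    (h1 : vle s'.inp t'.inp) (h2 : s'.loc = t'.loc) (h3 : s'.out = t'.out) : sle s' t' :=
  ⟨h1, by rw [h2]; exact vle_refl _, by rw [h3]; exact vle_refl _⟩

/-- Reachability simulation along the information order. -/
lemma reach_sim {m k n : ℕ} (C : Circuit m k n) {s0 t0 : CState m k n} (h0 : sle s0 t0)
    (t : ℕ) : ∀ u ∈ reach C t t0, ∃ s ∈ reach C t s0, sle s u := by
  induction t with
  | zero => intro u hu; rw [reach] at hu; subst hu; exact ⟨s0, rfl, h0⟩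
  | succ t ih =>
      rintro u ⟨v, hv, hsv⟩
      obtain ⟨s, hs, hsle⟩ := ih v hv
      obtain ⟨s', hsucc, h1, h2, h3⟩ := succ_sim C hsle hsv
      exact ⟨s', ⟨s, hs, hsucc⟩, sle_of_parts h1 h2 h3⟩


/-! ### The fan-out circuit: `r` rounds suffice -/

set_option linter.unreachableTactic false in
set_option linter.unusedTactic false in
lemma regRead_simple_eq {a x st' : BM} (h : regRead RegType.simple a (x, st')) : x = a := by
  cases a <;> (injection h with h1 h2 <;> exact h1)

/-- Wire targets for the fan-out circuit. -/
def tgt (q j : ℕ) : ℕ := if j < q then j else 2*q - j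

lemma tgt_lt (q j : ℕ) : tgt q j < 1 + q := by unfold tgt; split <;> omega

/-- The fan-out circuit: a mask-0 input register feeding a shift register of
`r-1` simple local registers, outputs tapping the chain. -/
def fanCircuit (r : ℕ) : Circuit 1 (r-1) r where
  inType := fun _ => RegType.mask0
  locType := fun _ => RegType.simple
  outType := fun _ => RegType.simple
  logic := fun j => Comb.input ⟨tgt (r-1) (j : ℕ), tgt_lt _ _⟩
  init := fun _ => BM.zero

lemma fan_eval (r : ℕ) (o : Fin (1 + (r-1)) → BM) (j : Fin ((r-1) + r)) :
    evalLogic (fanCircuit r) o j = o ⟨tgt (r-1) (j : ℕ), tgt_lt _ _⟩ := rfl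

/-- The input-read sequence on a metastable input with destabilization index `i`. -/
def wseq (i s : ℕ) : BM := if s ≤ i then BM.zero else if s = i+1 then BM.metastable else BM.one

/-- Value pattern after `t` rounds at chain depth `d`, defect index `i`. -/
def patM (i t d : ℕ) : BM := if d < t then wseq i (t - d) else BM.zero

section FanPos

variable (r : ℕ)

/-- Invariant for the fan-out circuit on a metastable input. -/
def InvM (t : ℕ) (s : CState 1 (r-1) r) : Prop :=
  ∃ i, i ≤ t ∧ (s.inp 0 = if t ≤ i then BM.metastable else BM.one) ∧
    (∀ jl : Fin (r-1), ble (patM i t (jl : ℕ)) (s.loc jl)) ∧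
    (∀ jo : Fin r, ble (patM i t (r-1-(jo : ℕ))) (s.out jo))

lemma invM_step {t : ℕ} {s s' : CState 1 (r-1) r} (h : InvM r t s)
    (hs : Succ (fanCircuit r) s s') : InvM r (t+1) s' := by
  obtain ⟨i, hi, hinp, hlocI, houtI⟩ := h
  obtain ⟨o, ι', ⟨hin, hloc⟩, hι, hw⟩ := hs
  have hread_loc : ∀ jl : Fin (r-1), o (Fin.natAdd 1 jl) = s.loc jl := by
    intro jl
    obtain ⟨st', hst'⟩ := hloc jl
    exact regRead_simple_eq hst'
  have hv : regRead RegType.mask0 (s.inp 0) (o (Fin.castAdd (r-1) (0 : Fin 1)), ι' 0) := hin 0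
  rw [inResM_iff_vle] at hw
  have go : ∀ i', i' ≤ t+1 → (∀ u, u ≤ t → wseq i u = wseq i' u) →
      ble (wseq i' (t+1)) (o (Fin.castAdd (r-1) (0 : Fin 1))) →
      ι' 0 = (if t+1 ≤ i' then BM.metastable else BM.one) →
      InvM r (t+1) s' := by
    intro i' hi'le hagree hv0 hinp'
    have KEY : ∀ d : Fin (1 + (r-1)), ble (patM i' (t+1) (d : ℕ)) (o d) := by
      intro d
      rcases Nat.eq_zero_or_pos (d : ℕ) with hd0 | hd0
      · have hde : d = Fin.castAdd (r-1) (0 : Fin 1) := Fin.ext (by simpa using hd0)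
        rw [hde]
        have hval : ((Fin.castAdd (r-1) (0 : Fin 1) : Fin (1 + (r-1))) : ℕ) = 0 := rfl
        rw [hval]
        have : patM i' (t+1) 0 = wseq i' (t+1) := by simp [patM]
        rw [this]; exact hv0
      · have hdlt : (d : ℕ) - 1 < r - 1 := by
          have := d.isLt; omega
        have hde : d = Fin.natAdd 1 ⟨(d : ℕ) - 1, hdlt⟩ := by
          apply Fin.ext; simp [Fin.natAdd]; omega
        have hval : ((Fin.natAdd 1 ⟨(d : ℕ) - 1, hdlt⟩ : Fin (1 + (r-1))) : ℕ) = (d : ℕ) := by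
          simp [Fin.natAdd]; omega
        have hpat : patM i' (t+1) (d : ℕ) = patM i t ((d : ℕ) - 1) := by
          unfold patM
          rcases Nat.lt_or_ge ((d : ℕ) - 1) t with hh | hh
          · rw [if_pos (by omega), if_pos (by omega)]
            have harg : t + 1 - (d : ℕ) = t - ((d : ℕ) - 1) := by omega
            rw [harg]
            exact (hagree _ (by omega)).symm
          · rw [if_neg (by omega), if_neg (by omega)]
        rw [hde, hread_loc, hval, hpat]
        exact hlocI ⟨(d : ℕ) - 1, hdlt⟩
    refine ⟨i', hi'le, ?_, ?_, ?_⟩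
    · rw [hι]; exact hinp'
    · intro jl
      have h1 := hw (Fin.castAdd r jl)
      rw [append_loc_out_castAdd, fan_eval] at h1
      have hfe : (⟨tgt (r-1) ((Fin.castAdd r jl : Fin ((r-1)+r)) : ℕ), tgt_lt _ _⟩ :
          Fin (1 + (r-1))) = ⟨(jl : ℕ), by omega⟩ := by
        apply Fin.ext; simp [tgt, jl.isLt]
      rw [hfe] at h1
      exact ble_trans (KEY ⟨(jl : ℕ), by omega⟩) h1
    · intro jo
      have h1 := hw (Fin.natAdd (r-1) jo)
      rw [append_loc_out_natAdd, fan_eval] at h1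
      have hfe : (⟨tgt (r-1) ((Fin.natAdd (r-1) jo : Fin ((r-1)+r)) : ℕ), tgt_lt _ _⟩ :
          Fin (1 + (r-1))) = ⟨r - 1 - (jo : ℕ), by omega⟩ := by
        apply Fin.ext
        have hjo := jo.isLt
        simp [tgt, Fin.natAdd]
        omega
      rw [hfe] at h1
      exact ble_trans (KEY ⟨r - 1 - (jo : ℕ), by omega⟩) h1
  by_cases hit : t ≤ i
  · have hieq : i = t := le_antisymm hi hit
    rw [if_pos hit] at hinp
    rw [hinp] at hv
    rcases hv with hv | hv <;> injection hv with hv1 hv2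
    · -- masked read 0, input stays metastable
      refine go (t+1) le_rfl ?_ ?_ ?_
      · intro u hu; unfold wseq
        rw [if_pos (by omega), if_pos (by omega)]
      · rw [hv1]
        have : wseq (t+1) (t+1) = BM.zero := by unfold wseq; rw [if_pos (by omega)]
        rw [this]; exact ble_refl _
      · rw [if_pos (by omega)]; exact hv2
    · -- read meta, input destabilizes to 1
      refine go i (by omega) (fun u hu => rfl) ?_ ?_
      · have : wseq i (t+1) = BM.metastable := by
          unfold wseq; rw [if_neg (by omega), if_pos (by omega)]
        rw [this]; exact ble_meta _
      · rw [if_neg (by omega)]; exact hv2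
  · rw [if_neg hit] at hinp
    rw [hinp] at hv
    have hv' := regRead_stable (by simp) hv
    injection hv' with hv1 hv2
    refine go i (by omega) (fun u hu => rfl) ?_ ?_
    · rw [hv1]
      have : wseq i (t+1) = BM.one := by
        unfold wseq; rw [if_neg (by omega), if_neg (by omega)]
      rw [this]; exact ble_refl _
    · rw [if_neg (by omega)]; exact hv2

lemma invM_reach {ι : Fin 1 → BM} (hι : ι 0 = BM.metastable) :
    ∀ t, ∀ s ∈ reach (fanCircuit r) t (initState (fanCircuit r) ι), InvM r t s := by
  intro t
  induction t with
  | zero =>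
      intro s hs
      rw [reach] at hs
      subst hs
      refine ⟨0, le_rfl, by simpa [initState] using hι, ?_, ?_⟩ <;>
        (intro j; unfold patM; rw [if_neg (by omega)]) <;>
        exact Or.inr rfl
  | succ t ih =>
      rintro s ⟨u, hu, hsu⟩
      exact invM_step r (ih u hu) hsu

/-- Invariant for the fan-out circuit on a stable input. -/
def InvB (vb : BM) (t : ℕ) (s : CState 1 (r-1) r) : Prop :=
  s.inp 0 = vb ∧
    (∀ jl : Fin (r-1), ble (if (jl : ℕ) < t then vb else BM.zero) (s.loc jl)) ∧
    (∀ jo : Fin r, ble (if r-1-(jo : ℕ) < t then vb else BM.zero) (s.out jo))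

lemma invB_step {vb : BM} (hvb : vb ≠ BM.metastable) {t : ℕ} {s s' : CState 1 (r-1) r}
    (h : InvB r vb t s) (hs : Succ (fanCircuit r) s s') : InvB r vb (t+1) s' := by
  obtain ⟨hinp, hlocI, houtI⟩ := h
  obtain ⟨o, ι', ⟨hin, hloc⟩, hι, hw⟩ := hs
  have hread_loc : ∀ jl : Fin (r-1), o (Fin.natAdd 1 jl) = s.loc jl := by
    intro jl
    obtain ⟨st', hst'⟩ := hloc jl
    exact regRead_simple_eq hst'
  have hv : regRead RegType.mask0 (s.inp 0) (o (Fin.castAdd (r-1) (0 : Fin 1)), ι' 0) := hin 0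
  rw [hinp] at hv
  have hv' := regRead_stable hvb hv
  injection hv' with hv1 hv2
  rw [inResM_iff_vle] at hw
  have KEY : ∀ d : Fin (1 + (r-1)),
      ble (if (d : ℕ) < t+1 then vb else BM.zero) (o d) := by
    intro d
    rcases Nat.eq_zero_or_pos (d : ℕ) with hd0 | hd0
    · have hde : d = Fin.castAdd (r-1) (0 : Fin 1) := Fin.ext (by simpa using hd0)
      rw [hde]
      have hval : ((Fin.castAdd (r-1) (0 : Fin 1) : Fin (1 + (r-1))) : ℕ) = 0 := rfl
      rw [hval, if_pos (by omega), hv1]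
      exact ble_refl _
    · have hdlt : (d : ℕ) - 1 < r - 1 := by have := d.isLt; omega
      have hde : d = Fin.natAdd 1 ⟨(d : ℕ) - 1, hdlt⟩ := by
        apply Fin.ext; simp [Fin.natAdd]; omega
      have hval : ((Fin.natAdd 1 ⟨(d : ℕ) - 1, hdlt⟩ : Fin (1 + (r-1))) : ℕ) = (d : ℕ) := by
        simp [Fin.natAdd]; omega
      rw [hde, hread_loc, hval]
      have := hlocI ⟨(d : ℕ) - 1, hdlt⟩
      rcases Nat.lt_or_ge ((d : ℕ) - 1) t with hh | hh
      · rw [if_pos (by omega)]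
        rw [if_pos (by simpa using hh)] at this
        exact this
      · rw [if_neg (by omega)]
        rw [if_neg (by simpa using hh)] at this
        exact this
  refine ⟨by rw [hι]; exact hv2, ?_, ?_⟩
  · intro jl
    have h1 := hw (Fin.castAdd r jl)
    rw [append_loc_out_castAdd, fan_eval] at h1
    have hfe : (⟨tgt (r-1) ((Fin.castAdd r jl : Fin ((r-1)+r)) : ℕ), tgt_lt _ _⟩ :
        Fin (1 + (r-1))) = ⟨(jl : ℕ), by omega⟩ := by
      apply Fin.ext; simp [tgt, jl.isLt]
    rw [hfe] at h1
    exact ble_trans (KEY ⟨(jl : ℕ), by omega⟩) h1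
  · intro jo
    have h1 := hw (Fin.natAdd (r-1) jo)
    rw [append_loc_out_natAdd, fan_eval] at h1
    have hfe : (⟨tgt (r-1) ((Fin.natAdd (r-1) jo : Fin ((r-1)+r)) : ℕ), tgt_lt _ _⟩ :
        Fin (1 + (r-1))) = ⟨r - 1 - (jo : ℕ), by omega⟩ := by
      apply Fin.ext
      have hjo := jo.isLt
      simp [tgt, Fin.natAdd]
      omega
    rw [hfe] at h1
    exact ble_trans (KEY ⟨r - 1 - (jo : ℕ), by omega⟩) h1

lemma invB_reach {vb : BM} (hvb : vb ≠ BM.metastable) {ι : Fin 1 → BM} (hι : ι 0 = vb) :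
    ∀ t, ∀ s ∈ reach (fanCircuit r) t (initState (fanCircuit r) ι), InvB r vb t s := by
  intro t
  induction t with
  | zero =>
      intro s hs
      rw [reach] at hs
      subst hs
      refine ⟨by simpa [initState] using hι, ?_, ?_⟩ <;>
        (intro j; rw [if_neg (by omega)]) <;> exact Or.inr rfl
  | succ t ih =>
      rintro s ⟨u, hu, hsu⟩
      exact invB_step r hvb (ih u hu) hsu

/-- The fan-out circuit implements the fan-out function in `r` rounds. -/
lemma fanCircuit_implements (hr : 1 ≤ r) : Implements (fanCircuit r) r (fanout r) := by
  rintro ι y ⟨s, hs, rfl⟩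
  cases hι : ι 0 with
  | metastable =>
      obtain ⟨i, hi, _, _, houtI⟩ := invM_reach r hι r s hs
      have hfan : fanout r ι = { y | ∃ p : Fin r, inResM (fanoutWord r (p : ℕ)) y } := by
        unfold fanout; rw [hι]
      rw [hfan]
      have hout : ∀ jo : Fin r, ble (wseq i ((jo : ℕ)+1)) (s.out jo) := by
        intro jo
        have := houtI jo
        have harg : patM i r (r-1-(jo : ℕ)) = wseq i ((jo : ℕ)+1) := by
          unfold patM
          rw [if_pos (by omega)]
          congr 1
          have := jo.isLt; omega
        rwa [harg] at this
      by_cases hir : i ≤ r - 1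
      · refine ⟨⟨i, by omega⟩, ?_⟩
        show inResM (fanoutWord r i) s.out
        intro j
        rcases Nat.lt_trichotomy (j : ℕ) i with hj | hj | hj
        · left
          have h0 : wseq i ((j : ℕ)+1) = BM.zero := by unfold wseq; rw [if_pos (by omega)]
          have := hout j; rw [h0] at this
          rw [fanoutWord]; rw [if_pos (by simpa using hj)]
          exact (ble_zero this).symm
        · right; rw [fanoutWord, if_neg (by omega), if_pos (by simpa using hj)]
        · left
          have h0 : wseq i ((j : ℕ)+1) = BM.one := by
            unfold wseq; rw [if_neg (by omega), if_neg (by omega)]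
          have := hout j; rw [h0] at this
          rw [fanoutWord, if_neg (by omega), if_neg (by omega)]
          exact (ble_one this).symm
      · -- i = r, never destabilized: all outputs zero
        refine ⟨⟨r-1, by omega⟩, ?_⟩
        show inResM (fanoutWord r (r-1)) s.out
        intro j
        have hj := j.isLt
        rcases Nat.lt_or_ge (j : ℕ) (r-1) with hjr | hjr
        · left
          have h0 : wseq i ((j : ℕ)+1) = BM.zero := by unfold wseq; rw [if_pos (by omega)]
          have := hout j; rw [h0] at this
          rw [fanoutWord, if_pos (by simpa using hjr)]
          exact (ble_zero this).symm
        · right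
          have : (j : ℕ) = r - 1 := by omega
          rw [fanoutWord, if_neg (by omega), if_pos (by simpa using this)]
  | zero =>
      obtain ⟨_, _, houtI⟩ := invB_reach r (vb := BM.zero) (by simp) hι r s hs
      have hfan : fanout r ι = {fun _ => BM.zero} := by unfold fanout; rw [hι]
      rw [hfan, Set.mem_singleton_iff]
      funext jo
      have := houtI jo
      rw [if_pos (by have := jo.isLt; omega)] at this
      exact ble_zero this
  | one =>
      obtain ⟨_, _, houtI⟩ := invB_reach r (vb := BM.one) (by simp) hι r s hs
      have hfan : fanout r ι = {fun _ => BM.one} := by unfold fanout; rw [hι]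
      rw [hfan, Set.mem_singleton_iff]
      funext jo
      have := houtI jo
      rw [if_pos (by have := jo.isLt; omega)] at this
      exact ble_one this

end FanPos

lemma fanout_mem_FunM {r : ℕ} (hr : 1 ≤ r) : fanout r ∈ FunM r 1 r :=
  ⟨r - 1, fanCircuit r, fanCircuit_implements r hr⟩


/-! ### Round padding: anything done in `r` rounds can be done in `r+1` rounds -/

lemma boolRes_val_zero {N : ℕ} {x : Fin N → BM} {z : Fin N → Bool} (hz : z ∈ boolRes x)
    {i : Fin N} (h : x i = BM.zero) : z i = false := by
  rcases hz i with h' | h'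
  · rw [h] at h'; cases hb : z i <;> rw [hb] at h' <;> simp [BM.ofBool] at h' ⊢
  · rw [h] at h'; exact absurd h' (by simp)

lemma boolRes_val_one {N : ℕ} {x : Fin N → BM} {z : Fin N → Bool} (hz : z ∈ boolRes x)
    {i : Fin N} (h : x i = BM.one) : z i = true := by
  rcases hz i with h' | h'
  · rw [h] at h'; cases hb : z i <;> rw [hb] at h' <;> simp [BM.ofBool] at h' ⊢
  · rw [h] at h'; exact absurd h' (by simp)

lemma resolveWith_val_meta {N : ℕ} {x : Fin N → BM} {i : Fin N} (b : Bool)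
    (h : x i = BM.metastable) : resolveWith x b i = b := by
  unfold resolveWith; rw [h]

/-- Relabelling combinational logic along an inclusion of inputs. -/
def Comb.relabel {m m' : ℕ} (h : m ≤ m') : Comb m → Comb m'
  | .input i => .input (Fin.castLE h i)
  | .const b => .const b
  | .gate j f cs => .gate j f (fun t => (cs t).relabel h)

lemma Comb.eval_relabel {m m' : ℕ} (h : m ≤ m') (x : Fin m' → BM) :
    ∀ c : Comb m, (c.relabel h).eval x = c.eval (fun i => x (Fin.castLE h i))
  | .input i => rfl
  | .const b => rfl
  | .gate j f cs => by
      show kleene f _ = kleene f _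
      congr 1
      funext t
      exact Comb.eval_relabel h x (cs t)

/-- The Boolean multiplexer. -/
def muxf : (Fin 3 → Bool) → Bool := fun z => cond (z 0) (z 1) (z 2)

def muxComb {M : ℕ} (sel a b : Comb M) : Comb M :=
  .gate 3 muxf (fun t => if t = 0 then sel else if t = 1 then a else b)

lemma kleene_muxf_zero {v : Fin 3 → BM} (h0 : v 0 = BM.zero) : kleene muxf v = v 2 := by
  have hval : ∀ z ∈ boolRes v, muxf z = z 2 := by
    intro z hz
    have h := boolRes_val_zero hz h0
    simp [muxf, h]
  cases hv2 : v 2 with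
  | zero =>
      unfold kleene
      rw [if_pos (fun z hz => by rw [hval z hz]; exact boolRes_val_zero hz hv2)]
  | one =>
      unfold kleene
      rw [if_neg, if_pos (fun z hz => by rw [hval z hz]; exact boolRes_val_one hz hv2)]
      intro hc
      have hm := resolveWith_mem v true
      have := hc _ hm
      rw [hval _ hm] at this
      rw [boolRes_val_one hm hv2] at this
      simp at this
  | metastable =>
      unfold kleene
      rw [if_neg, if_neg]
      · intro hc
        have hm := resolveWith_mem v false
        have := hc _ hm
        rw [hval _ hm, resolveWith_val_meta false hv2] at this
        simp at this
      · intro hc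
        have hm := resolveWith_mem v true
        have := hc _ hm
        rw [hval _ hm, resolveWith_val_meta true hv2] at this
        simp at this

lemma kleene_muxf_one {v : Fin 3 → BM} (h0 : v 0 = BM.one) : kleene muxf v = v 1 := by
  have hval : ∀ z ∈ boolRes v, muxf z = z 1 := by
    intro z hz
    have h := boolRes_val_one hz h0
    simp [muxf, h]
  cases hv1 : v 1 with
  | zero =>
      unfold kleene
      rw [if_pos (fun z hz => by rw [hval z hz]; exact boolRes_val_zero hz hv1)]
  | one =>
      unfold kleene
      rw [if_neg, if_pos (fun z hz => by rw [hval z hz]; exact boolRes_val_one hz hv1)]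
      intro hc
      have hm := resolveWith_mem v true
      have := hc _ hm
      rw [hval _ hm] at this
      rw [boolRes_val_one hm hv1] at this
      simp at this
  | metastable =>
      unfold kleene
      rw [if_neg, if_neg]
      · intro hc
        have hm := resolveWith_mem v false
        have := hc _ hm
        rw [hval _ hm, resolveWith_val_meta false hv1] at this
        simp at this
      · intro hc
        have hm := resolveWith_mem v true
        have := hc _ hm
        rw [hval _ hm, resolveWith_val_meta true hv1] at this
        simp at this

lemma muxComb_eval {M : ℕ} (sel a b : Comb M) (x : Fin M → BM) :
    (muxComb sel a b).eval x =
      kleene muxf (fun t : Fin 3 => if t = 0 then sel.eval x else if t = 1 then a.eval x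
        else b.eval x) := by
  show kleene muxf _ = _
  congr 1
  funext t
  by_cases h0 : t = 0
  · simp [h0]
  · by_cases h1 : t = 1 <;> simp [h0, h1]

lemma muxComb_eval_zero {M : ℕ} {sel : Comb M} (a b : Comb M) {x : Fin M → BM}
    (h : sel.eval x = BM.zero) : (muxComb sel a b).eval x = b.eval x := by
  rw [muxComb_eval]
  rw [kleene_muxf_zero (by simp [h])]
  simp

lemma muxComb_eval_one {M : ℕ} {sel : Comb M} (a b : Comb M) {x : Fin M → BM}
    (h : sel.eval x = BM.one) : (muxComb sel a b).eval x = a.eval x := by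
  rw [muxComb_eval]
  rw [kleene_muxf_one (by simp [h])]
  simp

section Pad

variable {m k n : ℕ} (C : Circuit m k n) (r : ℕ)

/-- The select wire: the last counter register. -/
def selC : Comb (m + (k + n + r)) :=
  if h : m + k + n + (r-1) < m + (k + n + r) then .input ⟨m + k + n + (r-1), h⟩
  else .const BM.zero

lemma selC_eval (hr : 1 ≤ r) (x : Fin (m + (k + n + r)) → BM) :
    (selC (m := m) (k := k) (n := n) r).eval x = x ⟨m + k + n + (r-1), by omega⟩ := by
  unfold selC
  rw [dif_pos (by omega)]
  rfl

/-- Logic of the padded circuit. -/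
noncomputable def padLogic (j : Fin ((k + n + r) + n)) : Comb (m + (k + n + r)) :=
  if hj : (j : ℕ) < k + n then
    muxComb (selC r) (.const BM.zero) ((C.logic ⟨(j : ℕ), hj⟩).relabel (by omega))
  else if hj2 : (j : ℕ) < k + n + r then
    (if (j : ℕ) = k + n then .const BM.one else .input ⟨m + (j : ℕ) - 1, by omega⟩)
  else
    muxComb (selC r) (.input ⟨m + k + ((j : ℕ) - (k + n + r)), by have := j.isLt; omega⟩)
      ((C.logic ⟨k + ((j : ℕ) - (k + n + r)), by have := j.isLt; omega⟩).relabel (by omega))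

/-- The padded circuit: simulates `C` for `r` rounds, then holds shadow copies of
the outputs for one extra round. -/
noncomputable def padC : Circuit m (k + n + r) n where
  inType := C.inType
  locType := fun j => if hj : (j : ℕ) < k then C.locType ⟨(j : ℕ), hj⟩ else RegType.simple
  outType := C.outType
  logic := padLogic C r
  init := fun j => if hj : (j : ℕ) < k + n then C.init ⟨(j : ℕ), hj⟩ else BM.zero

/-- Invariant of the padded circuit during the simulation phase. -/
def padInv (ι : Fin m → BM) (t : ℕ) (s' : CState m (k + n + r) n) : Prop :=
  (∀ i : Fin r, s'.loc ⟨k + n + (i : ℕ), by have := i.isLt; omega⟩ =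
      (if (i : ℕ) < t then BM.one else BM.zero)) ∧
  (∀ b : Fin n → BM,
      (∀ jo : Fin n, ble (s'.loc ⟨k + (jo : ℕ), by have := jo.isLt; omega⟩) (b jo)) →
      (⟨s'.inp, fun j => s'.loc ⟨(j : ℕ), by have := j.isLt; omega⟩, b⟩ : CState m k n) ∈
        reach C t (initState C ι))

end Pad


section PadProof

variable {m k n : ℕ} (C : Circuit m k n) (r : ℕ)

lemma pad_read_simple {s' : CState m (k+n+r) n} {o : Fin (m + (k+n+r)) → BM}
    {ι' : Fin m → BM} (hrd : ReadRel (padC C r) s' o ι')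
    (jv : ℕ) (hjv : jv < k+n+r) (hge : ¬ jv < k) :
    o (Fin.natAdd m ⟨jv, hjv⟩) = s'.loc ⟨jv, hjv⟩ := by
  obtain ⟨st', hst'⟩ := hrd.2 ⟨jv, hjv⟩
  have htype : (padC C r).locType ⟨jv, hjv⟩ = RegType.simple := by
    show (if hj : ((⟨jv, hjv⟩ : Fin (k+n+r)) : ℕ) < k then _ else RegType.simple) = _
    rw [dif_neg (show ¬ ((⟨jv, hjv⟩ : Fin (k+n+r)) : ℕ) < k from hge)]
  rw [htype] at hst'
  exact regRead_simple_eq hst'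

lemma padLogic_low (jv : ℕ) (hjv : jv < k + n) (hjv' : jv < (k+n+r) + n) :
    (padC C r).logic ⟨jv, hjv'⟩ =
      muxComb (selC r) (.const BM.zero) ((C.logic ⟨jv, hjv⟩).relabel (by omega)) := by
  show padLogic C r ⟨jv, hjv'⟩ = _
  unfold padLogic
  rw [dif_pos (show ((⟨jv, hjv'⟩ : Fin ((k+n+r)+n)) : ℕ) < k + n from hjv)]

lemma padLogic_cnt (iv : ℕ) (hiv : iv < r) (hjv' : k + n + iv < (k+n+r) + n) :
    (padC C r).logic ⟨k + n + iv, hjv'⟩ =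
      (if k + n + iv = k + n then Comb.const BM.one
       else Comb.input ⟨m + (k + n + iv) - 1, by omega⟩) := by
  show padLogic C r ⟨k + n + iv, hjv'⟩ = _
  unfold padLogic
  rw [dif_neg (show ¬ ((⟨k+n+iv, hjv'⟩ : Fin ((k+n+r)+n)) : ℕ) < k + n by
      show ¬ k+n+iv < k+n; omega),
    dif_pos (show ((⟨k+n+iv, hjv'⟩ : Fin ((k+n+r)+n)) : ℕ) < k + n + r by
      show k+n+iv < k+n+r; omega)]

lemma padLogic_out (jo : ℕ) (hjo : jo < n) (hjv' : (k+n+r) + jo < (k+n+r) + n) :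
    (padC C r).logic ⟨(k+n+r) + jo, hjv'⟩ =
      muxComb (selC r) (.input ⟨m + k + jo, by omega⟩)
        ((C.logic ⟨k + jo, by omega⟩).relabel (by omega)) := by
  show padLogic C r ⟨(k+n+r) + jo, hjv'⟩ = _
  unfold padLogic
  rw [dif_neg (show ¬ ((⟨(k+n+r)+jo, hjv'⟩ : Fin ((k+n+r)+n)) : ℕ) < k + n by
      show ¬ (k+n+r)+jo < k+n; omega),
    dif_neg (show ¬ ((⟨(k+n+r)+jo, hjv'⟩ : Fin ((k+n+r)+n)) : ℕ) < k + n + r by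
      show ¬ (k+n+r)+jo < k+n+r; omega)]
  refine congrArg₂ (muxComb (selC r)) (congrArg Comb.input (Fin.ext ?_)) ?_
  · show m + k + ((k+n+r) + jo - (k+n+r)) = m + k + jo
    omega
  · exact congrArg (fun c : Comb (m+k) => Comb.relabel (by omega) c)
      (congrArg C.logic (Fin.ext (show k + ((k+n+r) + jo - (k+n+r)) = k + jo by omega)))

lemma pad_core (hr : 1 ≤ r) {ι : Fin m → BM} {t : ℕ} (htr : t < r)
    {s' s'' : CState m (k+n+r) n}
    (hcnt : ∀ i : Fin r, s'.loc ⟨k + n + (i : ℕ), by have := i.isLt; omega⟩ =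
      (if (i : ℕ) < t then BM.one else BM.zero))
    (hreach : (⟨s'.inp, fun j => s'.loc ⟨(j : ℕ), by have := j.isLt; omega⟩,
        fun jo => s'.loc ⟨k + (jo : ℕ), by have := jo.isLt; omega⟩⟩ : CState m k n) ∈
        reach C t (initState C ι))
    (hs : Succ (padC C r) s' s'') : padInv C r ι (t+1) s'' := by
  obtain ⟨o, ι', hrd, hι, hw⟩ := hs
  rw [inResM_iff_vle] at hw
  -- the select wire reads 0
  have hsel : o ⟨m + k + n + (r-1), by omega⟩ = BM.zero := by
    have h1 := pad_read_simple C r hrd (k+n+(r-1)) (by omega) (by omega)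
    have he : (Fin.natAdd m ⟨k+n+(r-1), by omega⟩ : Fin (m + (k+n+r))) =
        ⟨m + k + n + (r-1), by omega⟩ := by
      apply Fin.ext; simp [Fin.natAdd]; omega
    rw [he] at h1
    have hc : s'.loc ⟨k+n+(r-1), by omega⟩ = (if r-1 < t then BM.one else BM.zero) :=
      hcnt ⟨r-1, by omega⟩
    rw [if_neg (by omega)] at hc
    rw [h1, hc]
  have hselC : (selC (m := m) (k := k) (n := n) r).eval o = BM.zero := by
    rw [selC_eval r hr o]; exact hsel
  -- the restricted read vector
  set oC : Fin (m + k) → BM := fun i => o (Fin.castLE (by omega) i) with hoC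
  have hinC : ∀ i : Fin m, regRead (C.inType i) (s'.inp i) (oC (Fin.castAdd k i), ι' i) := by
    intro i
    have h1 := hrd.1 i
    have : oC (Fin.castAdd k i) = o (Fin.castAdd (k+n+r) i) := congrArg o (Fin.ext rfl)
    rw [this]
    exact h1
  have hlocC : ∀ j : Fin k, ∃ st', regRead (C.locType j)
      (s'.loc ⟨(j : ℕ), by have := j.isLt; omega⟩) (oC (Fin.natAdd m j), st') := by
    intro j
    obtain ⟨st', hst'⟩ := hrd.2 ⟨(j : ℕ), by have := j.isLt; omega⟩
    refine ⟨st', ?_⟩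
    have htype : (padC C r).locType ⟨(j : ℕ), by have := j.isLt; omega⟩ = C.locType j := by
      show (if hj : ((⟨(j : ℕ), by have := j.isLt; omega⟩ : Fin (k+n+r)) : ℕ) < k
          then C.locType ⟨_, hj⟩ else RegType.simple) = _
      rw [dif_pos (show ((⟨(j : ℕ), by have := j.isLt; omega⟩ : Fin (k+n+r)) : ℕ) < k
        from j.isLt)]
    rw [htype] at hst'
    have : oC (Fin.natAdd m j) = o (Fin.natAdd m ⟨(j : ℕ), by have := j.isLt; omega⟩) :=
      congrArg o (Fin.ext rfl)
    rw [this]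
    exact hst'
  -- evaluation agreement on simulated coordinates
  have heval : ∀ (jv : ℕ) (hjv : jv < k + n),
      evalLogic (padC C r) o ⟨jv, by omega⟩ = evalLogic C oC ⟨jv, hjv⟩ := by
    intro jv hjv
    show ((padC C r).logic ⟨jv, by omega⟩).eval o = (C.logic ⟨jv, hjv⟩).eval oC
    rw [padLogic_low C r jv hjv (by omega)]
    rw [muxComb_eval_zero _ _ hselC]
    rw [Comb.eval_relabel]
  -- new counter values
  have hcnt' : ∀ i : Fin r, s''.loc ⟨k + n + (i : ℕ), by have := i.isLt; omega⟩ =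
      (if (i : ℕ) < t+1 then BM.one else BM.zero) := by
    intro i
    have hca : (⟨k + n + (i : ℕ), by have := i.isLt; omega⟩ : Fin ((k+n+r) + n)) =
        Fin.castAdd n ⟨k + n + (i : ℕ), by have := i.isLt; omega⟩ := Fin.ext rfl
    have hwi := hw ⟨k + n + (i : ℕ), by have := i.isLt; omega⟩
    rw [hca, append_loc_out_castAdd] at hwi
    have hLval : evalLogic (padC C r) o (Fin.castAdd n ⟨k + n + (i : ℕ), by
        have := i.isLt; omega⟩) = (if (i : ℕ) < t+1 then BM.one else BM.zero) := by
      show ((padC C r).logic _).eval o = _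
      have hL := padLogic_cnt C r (i : ℕ) i.isLt (by have := i.isLt; omega)
      have hca2 : (Fin.castAdd n (⟨k + n + (i : ℕ), by have := i.isLt; omega⟩ :
          Fin (k+n+r))) = (⟨k + n + (i : ℕ), by have := i.isLt; omega⟩ :
          Fin ((k+n+r) + n)) := Fin.ext rfl
      rw [hca2, hL]
      by_cases hi0 : (i : ℕ) = 0
      · rw [if_pos (by omega), if_pos (by omega)]
        rfl
      · rw [if_neg (by omega)]
        show o _ = _
        have hrd1 := pad_read_simple C r hrd (k + n + ((i : ℕ) - 1)) (by
          have := i.isLt; omega) (by omega)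
        have he : (Fin.natAdd m ⟨k + n + ((i : ℕ) - 1), by have := i.isLt; omega⟩ :
            Fin (m + (k+n+r))) = ⟨m + (k + n + (i : ℕ)) - 1, by have := i.isLt; omega⟩ := by
          apply Fin.ext; simp [Fin.natAdd]; omega
        rw [he] at hrd1
        rw [hrd1]
        have hc : s'.loc ⟨k + n + ((i : ℕ) - 1), by have := i.isLt; omega⟩ =
            (if (i : ℕ) - 1 < t then BM.one else BM.zero) := hcnt ⟨(i : ℕ) - 1, by
              have := i.isLt; omega⟩
        rw [hc]
        by_cases hit : (i : ℕ) - 1 < t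
        · rw [if_pos hit, if_pos (by omega)]
        · rw [if_neg hit, if_neg (by omega)]
    rw [hLval] at hwi
    by_cases hit : (i : ℕ) < t + 1
    · rw [if_pos hit] at hwi ⊢; exact ble_one hwi
    · rw [if_neg hit] at hwi ⊢; exact ble_zero hwi
  -- written values dominate the simulated logic
  have hble : ∀ (jv : ℕ) (hjv : jv < k+n),
      ble (evalLogic C oC ⟨jv, hjv⟩) (s''.loc ⟨jv, by omega⟩) := by
    intro jv hjv
    have hca : (⟨jv, by omega⟩ : Fin ((k+n+r) + n)) =
        Fin.castAdd n ⟨jv, by omega⟩ := Fin.ext rfl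
    have hwi := hw ⟨jv, (by omega : jv < (k+n+r) + n)⟩
    rw [hca, append_loc_out_castAdd] at hwi
    have : evalLogic (padC C r) o (Fin.castAdd n (⟨jv, by omega⟩ : Fin (k+n+r))) =
        evalLogic C oC ⟨jv, hjv⟩ := by
      have hca2 : (Fin.castAdd n (⟨jv, by omega⟩ : Fin (k+n+r))) =
          (⟨jv, by omega⟩ : Fin ((k+n+r) + n)) := Fin.ext rfl
      rw [hca2, heval jv hjv]
    rw [this] at hwi
    exact hwi
  refine ⟨hcnt', ?_⟩
  intro b hb
  refine ⟨_, hreach, ?_⟩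
  refine ⟨oC, ι', ⟨hinC, hlocC⟩, hι, ?_⟩
  rw [inResM_iff_vle]
  intro c
  refine Fin.addCases (fun j => ?_) (fun jo => ?_) c
  · rw [Fin.append_left]
    have h1 := hble (j : ℕ) (by have := j.isLt; omega)
    have he : (Fin.castAdd n j : Fin (k + n)) = ⟨(j : ℕ), by have := j.isLt; omega⟩ :=
      Fin.ext rfl
    rw [he]
    exact h1
  · rw [Fin.append_right]
    have h1 := hble (k + (jo : ℕ)) (by have := jo.isLt; omega)
    have he : (Fin.natAdd k jo : Fin (k + n)) = ⟨k + (jo : ℕ), by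
        have := jo.isLt; omega⟩ := Fin.ext rfl
    rw [he]
    exact ble_trans h1 (hb jo)

lemma pad_inv_reach (hr : 1 ≤ r) (ι : Fin m → BM) :
    ∀ t, 1 ≤ t → t ≤ r →
      ∀ s'' ∈ reach (padC C r) t (initState (padC C r) ι), padInv C r ι t s'' := by
  intro t
  induction t with
  | zero => omega
  | succ t ih =>
      intro _ htr s'' hs''
      obtain ⟨s', hs', hsucc⟩ := hs''
      rcases Nat.eq_zero_or_pos t with ht0 | ht0
      · subst ht0
        rw [reach] at hs'
        subst hs'
        refine pad_core C r hr (by omega) ?_ ?_ hsucc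
        · intro i
          show (padC C r).init (Fin.castAdd n ⟨k + n + (i : ℕ), _⟩) = _
          have he : (Fin.castAdd n (⟨k + n + (i : ℕ), by have := i.isLt; omega⟩ :
              Fin (k+n+r))) = (⟨k + n + (i : ℕ), by have := i.isLt; omega⟩ :
              Fin ((k+n+r) + n)) := Fin.ext rfl
          rw [he]
          show (if hj : ((⟨k + n + (i : ℕ), _⟩ : Fin ((k+n+r)+n)) : ℕ) < k + n
              then C.init ⟨_, hj⟩ else BM.zero) = _
          rw [dif_neg (show ¬ ((⟨k + n + (i : ℕ), (by have := i.isLt; omega :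
              k + n + (i : ℕ) < (k+n+r)+n)⟩ : Fin ((k+n+r)+n)) : ℕ) < k + n by
              show ¬ k + n + (i : ℕ) < k + n; omega)]
          rw [if_neg (by omega)]
        · show _ ∈ reach C 0 (initState C ι)
          show _ = initState C ι
          unfold initState
          congr 1
          · funext j
            show (padC C r).init (Fin.castAdd n ⟨(j : ℕ), _⟩) = C.init (Fin.castAdd n j)
            have he : (Fin.castAdd n (⟨(j : ℕ), by have := j.isLt; omega⟩ :
                Fin (k+n+r))) = (⟨(j : ℕ), by have := j.isLt; omega⟩ :
                Fin ((k+n+r) + n)) := Fin.ext rfl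
            rw [he]
            show (if hj : ((⟨(j : ℕ), _⟩ : Fin ((k+n+r)+n)) : ℕ) < k + n
                then C.init ⟨_, hj⟩ else BM.zero) = _
            rw [dif_pos (show ((⟨(j : ℕ), (by have := j.isLt; omega :
                (j : ℕ) < (k+n+r)+n)⟩ : Fin ((k+n+r)+n)) : ℕ) < k + n by
                  show (j : ℕ) < k + n; have := j.isLt; omega)]
            exact congrArg C.init (Fin.ext rfl)
          · funext jo
            show (padC C r).init (Fin.castAdd n ⟨k + (jo : ℕ), _⟩) = C.init (Fin.natAdd k jo)
            have he : (Fin.castAdd n (⟨k + (jo : ℕ), by have := jo.isLt; omega⟩ :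
                Fin (k+n+r))) = (⟨k + (jo : ℕ), by have := jo.isLt; omega⟩ :
                Fin ((k+n+r) + n)) := Fin.ext rfl
            rw [he]
            show (if hj : ((⟨k + (jo : ℕ), _⟩ : Fin ((k+n+r)+n)) : ℕ) < k + n
                then C.init ⟨_, hj⟩ else BM.zero) = _
            rw [dif_pos (show ((⟨k + (jo : ℕ), (by have := jo.isLt; omega :
                k + (jo : ℕ) < (k+n+r)+n)⟩ : Fin ((k+n+r)+n)) : ℕ) < k + n by
                  show k + (jo : ℕ) < k + n; have := jo.isLt; omega)]
            exact congrArg C.init (Fin.ext rfl)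
      · have hinv := ih (by omega) (by omega) s' hs'
        exact pad_core C r hr (by omega) hinv.1 (hinv.2 _ (fun jo => ble_refl _)) hsucc

lemma pad_implements (hr : 1 ≤ r) (f : (Fin m → BM) → Set (Fin n → BM))
    (hC : Implements C r f) : Implements (padC C r) (r+1) f := by
  intro ι y hy
  obtain ⟨s'', ⟨s', hs', hsucc⟩, rfl⟩ := hy
  have hinv := pad_inv_reach C r hr ι r hr le_rfl s' hs'
  obtain ⟨o, ι', hrd, hι, hw⟩ := hsucc
  rw [inResM_iff_vle] at hw
  -- the select wire reads 1 in the last round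
  have hsel : o ⟨m + k + n + (r-1), by omega⟩ = BM.one := by
    have h1 := pad_read_simple C r hrd (k+n+(r-1)) (by omega) (by omega)
    have he : (Fin.natAdd m ⟨k+n+(r-1), by omega⟩ : Fin (m + (k+n+r))) =
        ⟨m + k + n + (r-1), by omega⟩ := by
      apply Fin.ext; simp [Fin.natAdd]; omega
    rw [he] at h1
    have hc : s'.loc ⟨k+n+(r-1), by omega⟩ = (if r-1 < r then BM.one else BM.zero) :=
      hinv.1 ⟨r-1, by omega⟩
    rw [if_pos (by omega)] at hc
    rw [h1, hc]
  have hselC : (selC (m := m) (k := k) (n := n) r).eval o = BM.one := by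
    rw [selC_eval r hr o]; exact hsel
  -- outputs are resolutions of the shadow registers
  have hout : ∀ jo : Fin n,
      ble (s'.loc ⟨k + (jo : ℕ), by have := jo.isLt; omega⟩) (s''.out jo) := by
    intro jo
    have hwi := hw (Fin.natAdd (k+n+r) jo)
    rw [append_loc_out_natAdd] at hwi
    have hL : evalLogic (padC C r) o (Fin.natAdd (k+n+r) jo) =
        o ⟨m + k + (jo : ℕ), by have := jo.isLt; omega⟩ := by
      show ((padC C r).logic _).eval o = _
      have he : (Fin.natAdd (k+n+r) jo : Fin ((k+n+r) + n)) =
          ⟨(k+n+r) + (jo : ℕ), by have := jo.isLt; omega⟩ := Fin.ext rfl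
      rw [he, padLogic_out C r (jo : ℕ) jo.isLt (by have := jo.isLt; omega)]
      rw [muxComb_eval_one _ _ hselC]
      rfl
    rw [hL] at hwi
    have hrd1 := pad_read_simple C r hrd (k + (jo : ℕ)) (by have := jo.isLt; omega)
      (by omega)
    have he : (Fin.natAdd m ⟨k + (jo : ℕ), by have := jo.isLt; omega⟩ :
        Fin (m + (k+n+r))) = ⟨m + k + (jo : ℕ), by have := jo.isLt; omega⟩ := by
      apply Fin.ext; simp [Fin.natAdd]; omega
    rw [he] at hrd1
    rw [hrd1] at hwi
    exact hwi
  exact hC ι ⟨_, hinv.2 s''.out hout, rfl⟩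

end PadProof

lemma funMAll_mono (r : ℕ) (hr : 1 ≤ r) : FunMAll r ⊆ FunMAll (r+1) := by
  rintro ⟨m, n, f⟩ ⟨k, C, hC⟩
  exact ⟨k + n + r, padC C r, pad_implements C r hr f hC⟩


/-! ### Pivotal adjacency and connectivity of reachable sets -/

/-- Two words are pivotally adjacent (or equal): they differ in at most one
coordinate, at which one of them is metastable. -/
def adjF {N : ℕ} (x y : Fin N → BM) : Prop :=
  x = y ∨ ∃ j0, (∀ j, j ≠ j0 → x j = y j) ∧ (x j0 = BM.metastable ∨ y j0 = BM.metastable)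

lemma adjF_refl {N : ℕ} (x : Fin N → BM) : adjF x x := Or.inl rfl

lemma adjF_symm {N : ℕ} {x y : Fin N → BM} (h : adjF x y) : adjF y x := by
  rcases h with h | ⟨j0, hoff, hm⟩
  · exact Or.inl h.symm
  · exact Or.inr ⟨j0, fun j hj => (hoff j hj).symm, hm.symm⟩

/-- Pivotal adjacency on circuit states. -/
def adjS {k n : ℕ} (s t : CState 1 k n) : Prop :=
  (s.inp = t.inp ∧ s.loc = t.loc ∧ adjF s.out t.out) ∨
  (s.inp = t.inp ∧ adjF s.loc t.loc ∧ s.out = t.out) ∨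
  (adjF s.inp t.inp ∧ s.loc = t.loc ∧ s.out = t.out)

lemma adjS_refl {k n : ℕ} (s : CState 1 k n) : adjS s s :=
  Or.inl ⟨rfl, rfl, adjF_refl _⟩

lemma adjS_symm {k n : ℕ} {s t : CState 1 k n} (h : adjS s t) : adjS t s := by
  rcases h with ⟨h1, h2, h3⟩ | ⟨h1, h2, h3⟩ | ⟨h1, h2, h3⟩
  · exact Or.inl ⟨h1.symm, h2.symm, adjF_symm h3⟩
  · exact Or.inr (Or.inl ⟨h1.symm, adjF_symm h2, h3.symm⟩)
  · exact Or.inr (Or.inr ⟨adjF_symm h1, h2.symm, h3.symm⟩)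

/-- Connectivity within a set via a relation. -/
def conn {α : Type*} (S : Set α) (R : α → α → Prop) (x y : α) : Prop :=
  Relation.ReflTransGen (fun a b => R a b ∧ a ∈ S ∧ b ∈ S) x y

lemma conn_trans {α : Type*} {S : Set α} {R : α → α → Prop} {x y z : α}
    (h1 : conn S R x y) (h2 : conn S R y z) : conn S R x z :=
  Relation.ReflTransGen.trans h1 h2

lemma conn_symm {α : Type*} {S : Set α} {R : α → α → Prop} (hR : ∀ a b, R a b → R b a)
    {x y : α} (h : conn S R x y) : conn S R y x :=
  (@Relation.ReflTransGen.stdSymm _ (fun a b => R a b ∧ a ∈ S ∧ b ∈ S)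
    ⟨fun a b ⟨h1, h2, h3⟩ => ⟨hR a b h1, h3, h2⟩⟩).symm _ _ h

lemma conn_mono {α : Type*} {S S' : Set α} {R : α → α → Prop} (hS : S ⊆ S')
    {x y : α} (h : conn S R x y) : conn S' R x y :=
  Relation.ReflTransGen.mono (fun a b ⟨h1, h2, h3⟩ => ⟨h1, hS h2, hS h3⟩) _ _ h

/-- Interpolation between two words, switching coordinates in `T` to the second. -/
def mix {N : ℕ} (x y : Fin N → BM) (T : Finset (Fin N)) : Fin N → BM :=
  fun j => if j ∈ T then y j else x j

lemma mix_empty {N : ℕ} (x y : Fin N → BM) : mix x y ∅ = x := by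
  funext j; simp [mix]

lemma mix_univ {N : ℕ} (x y : Fin N → BM) : mix x y Finset.univ = y := by
  funext j; simp [mix]

/-- Walking from `x` to `y` one pivotal coordinate at a time. -/
lemma mix_walk {N : ℕ} (x y : Fin N → BM)
    (hc : ∀ j, x j = y j ∨ x j = BM.metastable ∨ y j = BM.metastable)
    (P : (Fin N → BM) → Prop) (hP : ∀ T, P (mix x y T)) :
    Relation.ReflTransGen (fun a b => adjF a b ∧ P a ∧ P b) x y := by
  classical
  have key : ∀ T : Finset (Fin N),
      Relation.ReflTransGen (fun a b => adjF a b ∧ P a ∧ P b) x (mix x y T) := by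
    intro T
    induction T using Finset.induction with
    | empty =>
        rw [mix_empty]
    | @insert a T ha ih =>
        rcases hc a with hca | hca
        · have : mix x y (insert a T) = mix x y T := by
            funext j
            by_cases hj : j = a
            · subst hj; simp [mix, ha, hca]
            · simp [mix, Finset.mem_insert, hj]
          rw [this]; exact ih
        · refine Relation.ReflTransGen.tail ih ⟨?_, ?_, ?_⟩
          · refine Or.inr ⟨a, ?_, ?_⟩
            · intro j hj
              simp [mix, Finset.mem_insert, hj]
            · have h1 : mix x y T a = x a := by simp [mix, ha]
              have h2 : mix x y (insert a T) a = y a := by simp [mix]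
              rw [h1, h2]
              exact hca
          · exact hP T
          · exact hP (insert a T)
  have := key Finset.univ
  rwa [mix_univ] at this

/-- Successor set of a state. -/
def SuccS {m k n : ℕ} (C : Circuit m k n) (p : CState m k n) : Set (CState m k n) :=
  { s' | Succ C p s' }

lemma CState.ext' {m k n : ℕ} {s t : CState m k n} (h1 : s.inp = t.inp)
    (h2 : s.loc = t.loc) (h3 : s.out = t.out) : s = t := by
  cases s; cases t; simp_all

lemma mkW_self {m k n : ℕ} (u : CState m k n) :
    mkW u.inp (Fin.append u.loc u.out) = u := by
  refine CState.ext' rfl ?_ ?_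
  · funext j; exact append_loc_out_castAdd u j
  · funext j; exact append_loc_out_natAdd u j

lemma adjS_of_adjF_w {k n : ℕ} (ι' : Fin 1 → BM) {w w' : Fin (k + n) → BM}
    (h : adjF w w') : adjS (mkW ι' w) (mkW ι' w') := by
  rcases h with h | ⟨j0, hoff, hm⟩
  · subst h; exact adjS_refl _
  · by_cases hj0 : (j0 : ℕ) < k
    · refine Or.inr (Or.inl ⟨rfl, ?_, ?_⟩)
      · refine Or.inr ⟨⟨(j0 : ℕ), hj0⟩, ?_, ?_⟩
        · intro j hj
          show w (Fin.castAdd n j) = w' (Fin.castAdd n j)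
          refine hoff _ (fun hc => hj ?_)
          apply Fin.ext
          have : ((Fin.castAdd n j : Fin (k+n)) : ℕ) = (j0 : ℕ) := by rw [hc]
          exact this
        · have : (Fin.castAdd n (⟨(j0 : ℕ), hj0⟩ : Fin k)) = j0 := Fin.ext rfl
          show w (Fin.castAdd n ⟨(j0 : ℕ), hj0⟩) = BM.metastable ∨
            w' (Fin.castAdd n ⟨(j0 : ℕ), hj0⟩) = BM.metastable
          rw [this]
          exact hm
      · funext j
        show w (Fin.natAdd k j) = w' (Fin.natAdd k j)
        refine hoff _ (fun hc => ?_)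
        have : ((Fin.natAdd k j : Fin (k+n)) : ℕ) = (j0 : ℕ) := by rw [hc]
        simp [Fin.natAdd] at this
        omega
    · have hj0' : (j0 : ℕ) - k < n := by have := j0.isLt; omega
      refine Or.inl ⟨rfl, ?_, ?_⟩
      · funext j
        show w (Fin.castAdd n j) = w' (Fin.castAdd n j)
        refine hoff _ (fun hc => ?_)
        have : ((Fin.castAdd n j : Fin (k+n)) : ℕ) = (j0 : ℕ) := by rw [hc]
        have hjk := j.isLt
        simp [Fin.castAdd, Fin.castLE] at this
        omega
      · refine Or.inr ⟨⟨(j0 : ℕ) - k, hj0'⟩, ?_, ?_⟩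
        · intro j hj
          show w (Fin.natAdd k j) = w' (Fin.natAdd k j)
          refine hoff _ (fun hc => hj ?_)
          apply Fin.ext
          have : ((Fin.natAdd k j : Fin (k+n)) : ℕ) = (j0 : ℕ) := by rw [hc]
          simp [Fin.natAdd] at this ⊢
          omega
        · have : (Fin.natAdd k (⟨(j0 : ℕ) - k, hj0'⟩ : Fin n)) = j0 := by
            apply Fin.ext
            simp [Fin.natAdd]
            omega
          show w (Fin.natAdd k ⟨(j0 : ℕ) - k, hj0'⟩) = BM.metastable ∨
            w' (Fin.natAdd k ⟨(j0 : ℕ) - k, hj0'⟩) = BM.metastable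
          rw [this]
          exact hm


section ConnProof

variable {k n : ℕ} (C : Circuit 1 k n)

lemma fin1_eta {ι ι' : Fin 1 → BM} (h : ι 0 = ι' 0) : ι = ι' := by
  funext j
  have hj : j = 0 := Subsingleton.elim _ _
  rw [hj, h]

lemma adjF_of_vle_fin1 {x y : Fin 1 → BM} (h : vle x y) : adjF x y := by
  rcases h 0 with hm | he
  · exact Or.inr ⟨0, fun j hj => absurd (Subsingleton.elim j 0) hj, Or.inl hm⟩
  · exact Or.inl (fin1_eta he)

lemma adjF_cases {N : ℕ} {x y : Fin N → BM} (h : adjF x y) :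
    x = y ∨ vle x y ∨ vle y x := by
  rcases h with h | ⟨j0, hoff, hm | hm⟩
  · exact Or.inl h
  · refine Or.inr (Or.inl (fun j => ?_))
    by_cases hj : j = j0
    · subst hj; exact Or.inl hm
    · exact Or.inr (hoff j hj)
  · refine Or.inr (Or.inr (fun j => ?_))
    by_cases hj : j = j0
    · subst hj; exact Or.inl hm
    · exact Or.inr (hoff j hj).symm

lemma regRead_pair {τ : RegType} {a x st x' st' : BM} (h : regRead τ a (x, st))
    (h' : regRead τ a (x', st')) : x = x' ∨ x = BM.metastable ∨ x' = BM.metastable := by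
  by_cases ha : a = BM.metastable
  · subst ha
    cases τ with
    | simple =>
        simp only [regRead, Prod.mk.injEq] at h
        exact Or.inr (Or.inl h.1)
    | mask0 =>
        simp only [regRead, Prod.mk.injEq] at h h'
        rcases h with ⟨hx, _⟩ | ⟨hx, _⟩
        · rcases h' with ⟨hx', _⟩ | ⟨hx', _⟩
          · left; rw [hx, hx']
          · exact Or.inr (Or.inr hx')
        · exact Or.inr (Or.inl hx)
    | mask1 =>
        simp only [regRead, Prod.mk.injEq] at h h'
        rcases h with ⟨hx, _⟩ | ⟨hx, _⟩
        · rcases h' with ⟨hx', _⟩ | ⟨hx', _⟩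
          · left; rw [hx, hx']
          · exact Or.inr (Or.inr hx')
        · exact Or.inr (Or.inl hx)
  · have e := regRead_stable ha h
    have e' := regRead_stable ha h'
    have ex : x = a := congrArg Prod.fst e
    have ex' : x' = a := congrArg Prod.fst e'
    left; rw [ex, ex']

lemma regRead_pair_strong {τ : RegType} {a x st x' st' : BM} (h : regRead τ a (x, st))
    (h' : regRead τ a (x', st')) :
    (x = x' ∧ st = st') ∨ (x = BM.metastable ∧ st' = BM.metastable) ∨
      (x' = BM.metastable ∧ st = BM.metastable) := by
  by_cases ha : a = BM.metastable
  · subst ha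
    cases τ with
    | simple =>
        simp only [regRead, Prod.mk.injEq] at h h'
        exact Or.inl ⟨h.1.trans h'.1.symm, h.2.trans h'.2.symm⟩
    | mask0 =>
        simp only [regRead, Prod.mk.injEq] at h h'
        rcases h with ⟨hx, hst⟩ | ⟨hx, hst⟩
        · rcases h' with ⟨hx', hst'⟩ | ⟨hx', hst'⟩
          · exact Or.inl ⟨hx.trans hx'.symm, hst.trans hst'.symm⟩
          · exact Or.inr (Or.inr ⟨hx', hst⟩)
        · rcases h' with ⟨hx', hst'⟩ | ⟨hx', hst'⟩
          · exact Or.inr (Or.inl ⟨hx, hst'⟩)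
          · exact Or.inl ⟨hx.trans hx'.symm, hst.trans hst'.symm⟩
    | mask1 =>
        simp only [regRead, Prod.mk.injEq] at h h'
        rcases h with ⟨hx, hst⟩ | ⟨hx, hst⟩
        · rcases h' with ⟨hx', hst'⟩ | ⟨hx', hst'⟩
          · exact Or.inl ⟨hx.trans hx'.symm, hst.trans hst'.symm⟩
          · exact Or.inr (Or.inr ⟨hx', hst⟩)
        · rcases h' with ⟨hx', hst'⟩ | ⟨hx', hst'⟩
          · exact Or.inr (Or.inl ⟨hx, hst'⟩)
          · exact Or.inl ⟨hx.trans hx'.symm, hst.trans hst'.symm⟩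
  · have e := regRead_stable ha h
    have e' := regRead_stable ha h'
    have ex : x = a := congrArg Prod.fst e
    have est : st = a := congrArg Prod.snd e
    have ex' : x' = a := congrArg Prod.fst e'
    have est' : st' = a := congrArg Prod.snd e'
    exact Or.inl ⟨ex.trans ex'.symm, est.trans est'.symm⟩

lemma succ_mkW_mem {p : CState 1 k n} {o : Fin (1+k) → BM} {ι' : Fin 1 → BM}
    (hrd : ReadRel C p o ι') {w : Fin (k+n) → BM} (hw : vle (evalLogic C o) w) :
    mkW ι' w ∈ SuccS C p :=
  ⟨o, ι', hrd, rfl, by rw [mkW_append, inResM_iff_vle]; exact hw⟩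

lemma succ_resolve_conn {p : CState 1 k n} {o : Fin (1+k) → BM} {ι' : Fin 1 → BM}
    (hrd : ReadRel C p o ι') {u : CState 1 k n} (hu : u.inp = ι')
    (hvle : vle (evalLogic C o) (Fin.append u.loc u.out)) :
    conn (SuccS C p) adjS u (mkW ι' (evalLogic C o)) := by
  have hwalk := mix_walk (evalLogic C o) (Fin.append u.loc u.out)
    (fun j => by rcases hvle j with h | h; exacts [Or.inr (Or.inl h), Or.inl h])
    (fun w => mkW ι' w ∈ SuccS C p)
    (fun T => succ_mkW_mem C hrd (fun j => by
      show ble _ (if j ∈ T then _ else _)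
      split
      · exact hvle j
      · exact ble_refl _))
  have hlift : ∀ (a b : Fin (k+n) → BM), Relation.ReflTransGen
      (fun a b => adjF a b ∧ (mkW ι' a ∈ SuccS C p) ∧ (mkW ι' b ∈ SuccS C p)) a b →
      conn (SuccS C p) adjS (mkW ι' a) (mkW ι' b) := by
    intro a b h
    induction h with
    | refl => exact Relation.ReflTransGen.refl
    | tail h1 h2 ih =>
        exact Relation.ReflTransGen.tail ih ⟨adjS_of_adjF_w ι' h2.1, h2.2⟩
  have h2 := hlift _ _ hwalk
  have h3 : mkW ι' (Fin.append u.loc u.out) = u := by rw [← hu]; exact mkW_self u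
  rw [h3] at h2
  exact conn_symm (fun _ _ => adjS_symm) h2

lemma readrel_mix {p : CState 1 k n} {o₁ o₂ : Fin (1+k) → BM} {ι' : Fin 1 → BM}
    (h1 : ReadRel C p o₁ ι') (h2 : ReadRel C p o₂ ι') (T : Finset (Fin (1 + k))) :
    ReadRel C p (mix o₁ o₂ T) ι' := by
  constructor
  · intro i
    show regRead _ _ (if _ ∈ T then _ else _, _)
    split
    · exact h2.1 i
    · exact h1.1 i
  · intro j
    show ∃ st', regRead _ _ (if _ ∈ T then _ else _, st')
    split
    · exact h2.2 j
    · exact h1.2 j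

lemma succ_read_conn {p : CState 1 k n} {o₁ o₂ : Fin (1+k) → BM} {ι' : Fin 1 → BM}
    (h1 : ReadRel C p o₁ ι') (h2 : ReadRel C p o₂ ι') :
    conn (SuccS C p) adjS (mkW ι' (evalLogic C o₁)) (mkW ι' (evalLogic C o₂)) := by
  classical
  have hcoord : ∀ c, o₁ c = o₂ c ∨ o₁ c = BM.metastable ∨ o₂ c = BM.metastable := by
    intro c
    refine Fin.addCases (fun i => ?_) (fun j => ?_) c
    · exact regRead_pair (h1.1 i) (h2.1 i)
    · obtain ⟨st1, hst1⟩ := h1.2 j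
      obtain ⟨st2, hst2⟩ := h2.2 j
      exact regRead_pair hst1 hst2
  have key : ∀ T : Finset (Fin (1 + k)),
      conn (SuccS C p) adjS (mkW ι' (evalLogic C o₁))
        (mkW ι' (evalLogic C (mix o₁ o₂ T))) := by
    intro T
    induction T using Finset.induction with
    | empty =>
        rw [mix_empty]
        exact Relation.ReflTransGen.refl
    | @insert a T ha ih =>
        have hmix1 : ReadRel C p (mix o₁ o₂ T) ι' := readrel_mix C h1 h2 T
        have hmix2 : ReadRel C p (mix o₁ o₂ (insert a T)) ι' := readrel_mix C h1 h2 _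
        have hsame : ∀ c, c ≠ a → mix o₁ o₂ (insert a T) c = mix o₁ o₂ T c := by
          intro c hc; simp [mix, Finset.mem_insert, hc]
        have hTa : mix o₁ o₂ T a = o₁ a := by simp [mix, ha]
        have hIa : mix o₁ o₂ (insert a T) a = o₂ a := by simp [mix]
        rcases hcoord a with hca | hca | hca
        · have he : mix o₁ o₂ (insert a T) = mix o₁ o₂ T := by
            funext c
            by_cases hc : c = a
            · subst hc; rw [hIa, hTa]; exact hca.symm
            · exact hsame c hc
          rw [he]; exact ih
        · have hv : vle (mix o₁ o₂ T) (mix o₁ o₂ (insert a T)) := by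
            intro c
            by_cases hc : c = a
            · subst hc; rw [hTa, hca]; exact ble_meta _
            · rw [hsame c hc]; exact ble_refl _
          refine conn_trans ih (conn_symm (fun _ _ => adjS_symm) ?_)
          refine succ_resolve_conn C hmix1 rfl ?_
          rw [mkW_append]
          exact evalLogic_mono C hv
        · have hv : vle (mix o₁ o₂ (insert a T)) (mix o₁ o₂ T) := by
            intro c
            by_cases hc : c = a
            · subst hc; rw [hIa, hca]; exact ble_meta _
            · rw [hsame c hc]; exact ble_refl _
          refine conn_trans ih ?_
          refine succ_resolve_conn C hmix2 rfl ?_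
          rw [mkW_append]
          exact evalLogic_mono C hv
  have h := key Finset.univ
  rwa [mix_univ] at h

lemma succ_conn {p u₁ u₂ : CState 1 k n} (hu1 : u₁ ∈ SuccS C p) (hu2 : u₂ ∈ SuccS C p) :
    conn (SuccS C p) adjS u₁ u₂ := by
  classical
  obtain ⟨o₁, ι₁, hrd1, hι1, hw1⟩ := hu1
  obtain ⟨o₂, ι₂, hrd2, hι2, hw2⟩ := hu2
  rw [inResM_iff_vle] at hw1 hw2
  have hc1 : conn (SuccS C p) adjS u₁ (mkW ι₁ (evalLogic C o₁)) :=
    succ_resolve_conn C hrd1 hι1 hw1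
  have hc2 : conn (SuccS C p) adjS u₂ (mkW ι₂ (evalLogic C o₂)) :=
    succ_resolve_conn C hrd2 hι2 hw2
  set ic : Fin (1 + k) := Fin.castAdd k (0 : Fin 1) with hic
  set o₂' : Fin (1+k) → BM := mix o₂ o₁ {ic} with ho₂'
  have ho₂'_ic : o₂' ic = o₁ ic := by simp [ho₂', mix]
  have ho₂'_loc : ∀ j : Fin k, o₂' (Fin.natAdd 1 j) = o₂ (Fin.natAdd 1 j) := by
    intro j
    have : Fin.natAdd 1 j ≠ ic := by
      intro hc
      have : ((Fin.natAdd 1 j : Fin (1+k)) : ℕ) = (ic : ℕ) := by rw [hc]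
      simp [Fin.natAdd, hic] at this
    simp [ho₂', mix, this]
  have hrd2' : ReadRel C p o₂' ι₁ := by
    constructor
    · intro i
      have hi : i = 0 := Subsingleton.elim _ _
      subst hi
      rw [show Fin.castAdd k (0 : Fin 1) = ic from rfl, ho₂'_ic]
      exact hrd1.1 0
    · intro j
      rw [ho₂'_loc j]
      exact hrd2.2 j
  have hpair := regRead_pair_strong (hrd1.1 0) (hrd2.1 0)
  rcases hpair with ⟨hx, hst⟩ | ⟨hx, hst⟩ | ⟨hx, hst⟩
  · -- identical input behaviour
    have hιeq : ι₁ = ι₂ := fin1_eta hst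
    subst hιeq
    have ho : o₂' = o₂ := by
      funext c
      by_cases hc : c = ic
      · subst hc; rw [ho₂'_ic]; exact hx
      · show (if c ∈ ({ic} : Finset (Fin (1+k))) then o₁ c else o₂ c) = o₂ c
        simp [hc]
    refine conn_trans hc1 (conn_trans ?_ (conn_symm (fun _ _ => adjS_symm) hc2))
    have := succ_read_conn C hrd1 hrd2'
    rwa [ho] at this
  · -- o₁ reads meta at the input, ι₂ keeps meta
    have hvle : vle o₂' o₂ := by
      intro c
      by_cases hc : c = ic
      · subst hc; rw [ho₂'_ic, hx]; exact ble_meta _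
      · show ble (if c ∈ ({ic} : Finset (Fin (1+k))) then o₁ c else o₂ c) (o₂ c)
        simp [hc]; exact ble_refl _
    have hD : mkW ι₁ (evalLogic C o₂) ∈ SuccS C p :=
      succ_mkW_mem C hrd2' (evalLogic_mono C hvle)
    have hA : mkW ι₂ (evalLogic C o₂) ∈ SuccS C p :=
      succ_mkW_mem C hrd2 (vle_refl _)
    have hDA : adjS (mkW ι₁ (evalLogic C o₂)) (mkW ι₂ (evalLogic C o₂)) := by
      refine Or.inr (Or.inr ⟨?_, rfl, rfl⟩)
      refine Or.inr ⟨0, fun j hj => absurd (Subsingleton.elim j 0) hj, Or.inr hst⟩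
    refine conn_trans hc1 ?_
    refine conn_trans (succ_read_conn C hrd1 hrd2') ?_
    refine conn_trans (conn_symm (fun _ _ => adjS_symm)
      (succ_resolve_conn C hrd2' (u := mkW ι₁ (evalLogic C o₂)) rfl
        (by rw [mkW_append]; exact evalLogic_mono C hvle))) ?_
    refine conn_trans (Relation.ReflTransGen.single ⟨hDA, hD, hA⟩) ?_
    exact conn_symm (fun _ _ => adjS_symm) hc2
  · -- o₂ reads meta at the input, ι₁ keeps meta
    have hvle : vle o₂ o₂' := by
      intro c
      by_cases hc : c = ic
      · subst hc; rw [hx]; exact ble_meta _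
      · show ble (o₂ c) (if c ∈ ({ic} : Finset (Fin (1+k))) then o₁ c else o₂ c)
        simp [hc]; exact ble_refl _
    have hE : mkW ι₂ (evalLogic C o₂') ∈ SuccS C p :=
      succ_mkW_mem C hrd2 (evalLogic_mono C hvle)
    have hE' : mkW ι₁ (evalLogic C o₂') ∈ SuccS C p :=
      succ_mkW_mem C hrd2' (vle_refl _)
    have hEE : adjS (mkW ι₁ (evalLogic C o₂')) (mkW ι₂ (evalLogic C o₂')) := by
      refine Or.inr (Or.inr ⟨?_, rfl, rfl⟩)
      refine Or.inr ⟨0, fun j hj => absurd (Subsingleton.elim j 0) hj, Or.inl hst⟩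
    refine conn_trans hc1 ?_
    refine conn_trans (succ_read_conn C hrd1 hrd2') ?_
    refine conn_trans (Relation.ReflTransGen.single ⟨hEE, hE', hE⟩) ?_
    refine conn_trans (succ_resolve_conn C hrd2 (u := mkW ι₂ (evalLogic C o₂')) rfl
      (by rw [mkW_append]; exact evalLogic_mono C hvle)) ?_
    exact conn_symm (fun _ _ => adjS_symm) hc2

lemma succ_adj_step {b c : CState 1 k n} (hadj : adjS b c) :
    ∃ u ∈ SuccS C b, ∃ u' ∈ SuccS C c, adjS u u' := by
  have hcmp : b = c ∨ sle b c ∨ sle c b := by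
    rcases hadj with ⟨h1, h2, h3⟩ | ⟨h1, h2, h3⟩ | ⟨h1, h2, h3⟩
    · rcases adjF_cases h3 with h | h | h
      · exact Or.inl (CState.ext' h1 h2 h)
      · exact Or.inr (Or.inl ⟨h1 ▸ vle_refl _, h2 ▸ vle_refl _, h⟩)
      · exact Or.inr (Or.inr ⟨h1 ▸ vle_refl _, h2 ▸ vle_refl _, h⟩)
    · rcases adjF_cases h2 with h | h | h
      · exact Or.inl (CState.ext' h1 h h3)
      · exact Or.inr (Or.inl ⟨h1 ▸ vle_refl _, h, h3 ▸ vle_refl _⟩)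
      · exact Or.inr (Or.inr ⟨h1 ▸ vle_refl _, h, h3 ▸ vle_refl _⟩)
    · rcases adjF_cases h1 with h | h | h
      · exact Or.inl (CState.ext' h h2 h3)
      · exact Or.inr (Or.inl ⟨h, h2 ▸ vle_refl _, h3 ▸ vle_refl _⟩)
      · exact Or.inr (Or.inr ⟨h, h2 ▸ vle_refl _, h3 ▸ vle_refl _⟩)
  rcases hcmp with h | h | h
  · subst h
    obtain ⟨u, hu⟩ := succ_exists C b
    exact ⟨u, hu, u, hu, adjS_refl u⟩
  · obtain ⟨u', hu'⟩ := succ_exists C c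
    obtain ⟨u, hu, h1, h2, h3⟩ := succ_sim C h hu'
    refine ⟨u, hu, u', hu', ?_⟩
    exact Or.inr (Or.inr ⟨adjF_of_vle_fin1 h1, h2, h3⟩)
  · obtain ⟨u, hu⟩ := succ_exists C b
    obtain ⟨u', hu', h1, h2, h3⟩ := succ_sim C h hu
    refine ⟨u, hu, u', hu', ?_⟩
    exact adjS_symm (Or.inr (Or.inr ⟨adjF_of_vle_fin1 h1, h2, h3⟩))

lemma reach_conn (s0 : CState 1 k n) :
    ∀ t, ∀ s ∈ reach C t s0, ∀ s' ∈ reach C t s0, conn (reach C t s0) adjS s s' := by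
  intro t
  induction t with
  | zero =>
      intro s hs s' hs'
      rw [reach] at hs hs'
      subst hs; subst hs'
      exact Relation.ReflTransGen.refl
  | succ t ih =>
      rintro s ⟨p, hp, hsp⟩ s' ⟨p', hp', hsp'⟩
      have hsub : ∀ q ∈ reach C t s0, SuccS C q ⊆ reach C (t+1) s0 :=
        fun q hq x hx => ⟨q, hq, hx⟩
      have hpath := ih p hp p' hp'
      -- lift the path
      have hlift : ∀ p'' , conn (reach C t s0) adjS p p'' → p'' ∈ reach C t s0 →
          ∀ u' ∈ SuccS C p'', conn (reach C (t+1) s0) adjS s u' := by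
        intro p'' hconn
        induction hconn with
        | refl =>
            intro hp'' u' hu'
            exact conn_mono (hsub p hp) (succ_conn C hsp hu')
        | @tail b' c' hab hbc ihc =>
            intro hc'' u' hu'
            obtain ⟨w, hw, w', hw', hww⟩ := succ_adj_step C hbc.1
            have c1 : conn (reach C (t+1) s0) adjS s w := ihc hbc.2.1 w hw
            have c2 : conn (reach C (t+1) s0) adjS w w' :=
              Relation.ReflTransGen.single ⟨hww, hsub _ hbc.2.1 hw, hsub _ hbc.2.2 hw'⟩
            have c3 : conn (reach C (t+1) s0) adjS w' u' :=
              conn_mono (hsub _ hbc.2.2) (succ_conn C hw' hu')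
            exact conn_trans c1 (conn_trans c2 c3)
      exact hlift p' hpath hp' s' hsp'

end ConnProof


/-! ### Canonical minimal runs on a metastable input -/

/-- Input-register read value at step `t` for destabilization time `θ`. -/
def ireadT : RegType → ℕ → ℕ → BM
  | RegType.simple, _, _ => BM.metastable
  | RegType.mask0, θ, t => if t < θ then BM.zero else if t = θ then BM.metastable else BM.one
  | RegType.mask1, θ, t => if t < θ then BM.one else if t = θ then BM.metastable else BM.zero

/-- Input-register state at time `t` for destabilization time `θ`. -/
def istateT : RegType → ℕ → ℕ → BM
  | RegType.simple, _, _ => BM.metastable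
  | RegType.mask0, θ, t => if t ≤ θ then BM.metastable else BM.one
  | RegType.mask1, θ, t => if t ≤ θ then BM.metastable else BM.zero

lemma istateT_zero (τ : RegType) (θ : ℕ) : istateT τ θ 0 = BM.metastable := by
  cases τ <;> simp [istateT]

lemma iread_valid (τ : RegType) (θ t : ℕ) :
    regRead τ (istateT τ θ t) (ireadT τ θ t, istateT τ θ (t+1)) := by
  cases τ with
  | simple => simp [istateT, ireadT, regRead]
  | mask0 =>
      simp only [istateT, ireadT]
      rcases Nat.lt_trichotomy t θ with h | h | h
      · rw [if_pos (le_of_lt h), if_pos h, if_pos (by omega)]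
        exact Or.inl rfl
      · subst h
        rw [if_pos le_rfl, if_neg (by omega), if_pos rfl, if_neg (by omega)]
        exact Or.inr rfl
      · rw [if_neg (by omega), if_neg (by omega), if_neg (by omega), if_neg (by omega)]
        rfl
  | mask1 =>
      simp only [istateT, ireadT]
      rcases Nat.lt_trichotomy t θ with h | h | h
      · rw [if_pos (le_of_lt h), if_pos h, if_pos (by omega)]
        exact Or.inl rfl
      · subst h
        rw [if_pos le_rfl, if_neg (by omega), if_pos rfl, if_neg (by omega)]
        exact Or.inr rfl
      · rw [if_neg (by omega), if_neg (by omega), if_neg (by omega), if_neg (by omega)]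
        rfl

lemma ireadT_agree (τ : RegType) {θ θ' t : ℕ} (h : t < θ) (h' : t < θ') :
    ireadT τ θ t = ireadT τ θ' t := by
  cases τ <;> simp [ireadT, h, h']

lemma istateT_agree (τ : RegType) {θ θ' t : ℕ} (h : t ≤ θ) (h' : t ≤ θ') :
    istateT τ θ t = istateT τ θ' t := by
  cases τ <;> simp [istateT, h, h']

section MuRun

variable {k r : ℕ} (C : Circuit 1 k r)

/-- The canonical minimal run on input `M`, destabilizing at step `θ`. -/
noncomputable def mu (θ : ℕ) : ℕ → CState 1 k r
  | 0 => initState C (fun _ => BM.metastable)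
  | (t+1) =>
      ⟨fun _ => istateT (C.inType 0) θ (t+1),
       fun j => evalLogic C (Fin.append (fun _ : Fin 1 => ireadT (C.inType 0) θ t)
         (mu θ t).loc) (Fin.castAdd r j),
       fun j => evalLogic C (Fin.append (fun _ : Fin 1 => ireadT (C.inType 0) θ t)
         (mu θ t).loc) (Fin.natAdd k j)⟩

/-- The read vector of the canonical run at step `t`. -/
noncomputable def muo (θ t : ℕ) : Fin (1 + k) → BM :=
  Fin.append (fun _ : Fin 1 => ireadT (C.inType 0) θ t) (mu C θ t).loc

lemma mu_zero (θ : ℕ) : mu C θ 0 = initState C (fun _ => BM.metastable) := rfl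

lemma mu_succ_loc (θ t : ℕ) :
    (mu C θ (t+1)).loc = fun j => evalLogic C (muo C θ t) (Fin.castAdd r j) := rfl

lemma mu_succ_out (θ t : ℕ) :
    (mu C θ (t+1)).out = fun j => evalLogic C (muo C θ t) (Fin.natAdd k j) := rfl

lemma mu_succ_inp (θ t : ℕ) :
    (mu C θ (t+1)).inp = fun _ => istateT (C.inType 0) θ (t+1) := rfl

lemma mu_inp (θ t : ℕ) : (mu C θ t).inp = fun _ => istateT (C.inType 0) θ t := by
  cases t with
  | zero => funext j; rw [istateT_zero]; rfl
  | succ t => rfl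

lemma mu_succ_rel (θ t : ℕ) : Succ C (mu C θ t) (mu C θ (t+1)) := by
  refine ⟨muo C θ t, fun _ => istateT (C.inType 0) θ (t+1), ⟨?_, ?_⟩, rfl, ?_⟩
  · intro i
    have hi : i = 0 := Subsingleton.elim _ _
    subst hi
    have h1 : muo C θ t (Fin.castAdd k 0) = ireadT (C.inType 0) θ t :=
      Fin.append_left _ _ 0
    rw [h1, mu_inp]
    exact iread_valid _ θ t
  · intro j
    have h1 : muo C θ t (Fin.natAdd 1 j) = (mu C θ t).loc j := Fin.append_right _ _ j
    rw [h1]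
    exact regRead_self _ _
  · have h2 : Fin.append (mu C θ (t+1)).loc (mu C θ (t+1)).out = evalLogic C (muo C θ t) := by
      funext c
      refine Fin.addCases (fun j => ?_) (fun j => ?_) c
      · rw [Fin.append_left]; rfl
      · rw [Fin.append_right]; rfl
    rw [h2]
    exact inResM_refl _

lemma mu_mem (θ : ℕ) : ∀ t, mu C θ t ∈ reach C t (initState C (fun _ => BM.metastable)) := by
  intro t
  induction t with
  | zero => rfl
  | succ t ih => exact ⟨mu C θ t, ih, mu_succ_rel C θ t⟩

lemma mu_agree {θ θ' : ℕ} : ∀ {t}, t ≤ θ → t ≤ θ' → mu C θ t = mu C θ' t := by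
  intro t
  induction t with
  | zero => intro _ _; rfl
  | succ t ih =>
      intro h h'
      have hml := ih (by omega) (by omega)
      have h1 : ireadT (C.inType 0) θ t = ireadT (C.inType 0) θ' t :=
        ireadT_agree _ (by omega) (by omega)
      have h2 : istateT (C.inType 0) θ (t+1) = istateT (C.inType 0) θ' (t+1) :=
        istateT_agree _ h h'
      refine CState.ext' ?_ ?_ ?_
      · rw [mu_succ_inp, mu_succ_inp, h2]
      · rw [mu_succ_loc, mu_succ_loc]
        unfold muo
        rw [h1, hml]
      · rw [mu_succ_out, mu_succ_out]
        unfold muo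
        rw [h1, hml]

lemma mu_simple_agree (hsimp : C.inType 0 = RegType.simple) (θ θ' : ℕ) :
    ∀ t, mu C θ t = mu C θ' t := by
  intro t
  induction t with
  | zero => rfl
  | succ t ih =>
      refine CState.ext' ?_ ?_ ?_
      · rw [mu_succ_inp, mu_succ_inp, hsimp]; simp [istateT]
      · rw [mu_succ_loc, mu_succ_loc]; unfold muo; rw [hsimp, ih]
        simp [ireadT]
      · rw [mu_succ_out, mu_succ_out]; unfold muo; rw [hsimp, ih]
        simp [ireadT]

/-- From the canonical run, any resolution of the final logic output is reachable. -/
lemma mu_res_reach (θ t : ℕ) {b : Fin r → BM} (hb : vle (mu C θ (t+1)).out b) :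
    (⟨(mu C θ (t+1)).inp, (mu C θ (t+1)).loc, b⟩ : CState 1 k r) ∈
      reach C (t+1) (initState C (fun _ => BM.metastable)) := by
  refine ⟨mu C θ t, mu_mem C θ t, ?_⟩
  refine ⟨muo C θ t, fun _ => istateT (C.inType 0) θ (t+1), ⟨?_, ?_⟩, rfl, ?_⟩
  · intro i
    have hi : i = 0 := Subsingleton.elim _ _
    subst hi
    have h1 : muo C θ t (Fin.castAdd k 0) = ireadT (C.inType 0) θ t :=
      Fin.append_left _ _ 0
    rw [h1, mu_inp]
    exact iread_valid _ θ t
  · intro j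
    have h1 : muo C θ t (Fin.natAdd 1 j) = (mu C θ t).loc j := Fin.append_right _ _ j
    rw [h1]
    exact regRead_self _ _
  · rw [inResM_iff_vle]
    intro c
    refine Fin.addCases (fun j => ?_) (fun j => ?_) c
    · rw [Fin.append_left]
      show ble _ ((mu C θ (t+1)).loc j)
      rw [mu_succ_loc]
      exact ble_refl _
    · rw [Fin.append_right]
      exact ble_trans (by rw [mu_succ_out] at hb ⊢; exact ble_refl _) (hb j)

/-- Per-step input classification for the domination invariant. -/
lemma input_step {τ : RegType} {θ t q : ℕ} (hθq : θ ≤ q) (hcase : θ = q ∨ θ < t)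
    (ht1 : t + 1 ≤ q) {x st : BM} (h : regRead τ (istateT τ θ t) (x, st)) :
    ∃ θ', θ' ≤ q ∧ (θ' = q ∨ θ' < t+1) ∧ (θ' = θ ∨ (t ≤ θ ∧ t ≤ θ')) ∧
      x = ireadT τ θ' t ∧ st = istateT τ θ' (t+1) := by
  cases τ with
  | simple =>
      have hx : x = BM.metastable := congrArg Prod.fst h
      have hst : st = BM.metastable := congrArg Prod.snd h
      exact ⟨θ, hθq, hcase.imp id (fun h2 => by omega), Or.inl rfl, hx, hst⟩
  | mask0 =>
      by_cases hts : t ≤ θ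
      · rw [show istateT RegType.mask0 θ t = BM.metastable by simp only [istateT]; rw [if_pos hts]] at h
        rcases h with h | h
        · have hx : x = BM.zero := congrArg Prod.fst h
          have hst : st = BM.metastable := congrArg Prod.snd h
          refine ⟨q, le_rfl, Or.inl rfl, Or.inr ⟨hts, by omega⟩, ?_, ?_⟩
          · rw [hx]; simp only [ireadT]; rw [if_pos (by omega)]
          · rw [hst]; simp only [istateT]; rw [if_pos (by omega)]
        · have hx : x = BM.metastable := congrArg Prod.fst h
          have hst : st = BM.one := congrArg Prod.snd h
          refine ⟨t, by omega, Or.inr (by omega), Or.inr ⟨hts, le_rfl⟩, ?_, ?_⟩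
          · rw [hx]; simp [ireadT]
          · rw [hst]; simp only [istateT]; rw [if_neg (by omega)]
      · rw [show istateT RegType.mask0 θ t = BM.one by simp only [istateT]; rw [if_neg hts]] at h
        have h2 := regRead_stable (show BM.one ≠ BM.metastable by simp) h
        have hx : x = BM.one := congrArg Prod.fst h2
        have hst : st = BM.one := congrArg Prod.snd h2
        refine ⟨θ, hθq, hcase.imp id (fun h3 => by omega), Or.inl rfl, ?_, ?_⟩
        · rw [hx]; simp only [ireadT]; rw [if_neg (by omega), if_neg (by omega)]
        · rw [hst]; simp only [istateT]; rw [if_neg (by omega)]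
  | mask1 =>
      by_cases hts : t ≤ θ
      · rw [show istateT RegType.mask1 θ t = BM.metastable by simp only [istateT]; rw [if_pos hts]] at h
        rcases h with h | h
        · have hx : x = BM.one := congrArg Prod.fst h
          have hst : st = BM.metastable := congrArg Prod.snd h
          refine ⟨q, le_rfl, Or.inl rfl, Or.inr ⟨hts, by omega⟩, ?_, ?_⟩
          · rw [hx]; simp only [ireadT]; rw [if_pos (by omega)]
          · rw [hst]; simp only [istateT]; rw [if_pos (by omega)]
        · have hx : x = BM.metastable := congrArg Prod.fst h
          have hst : st = BM.zero := congrArg Prod.snd h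
          refine ⟨t, by omega, Or.inr (by omega), Or.inr ⟨hts, le_rfl⟩, ?_, ?_⟩
          · rw [hx]; simp [ireadT]
          · rw [hst]; simp only [istateT]; rw [if_neg (by omega)]
      · rw [show istateT RegType.mask1 θ t = BM.zero by simp only [istateT]; rw [if_neg hts]] at h
        have h2 := regRead_stable (show BM.zero ≠ BM.metastable by simp) h
        have hx : x = BM.zero := congrArg Prod.fst h2
        have hst : st = BM.zero := congrArg Prod.snd h2
        refine ⟨θ, hθq, hcase.imp id (fun h3 => by omega), Or.inl rfl, ?_, ?_⟩
        · rw [hx]; simp only [ireadT]; rw [if_neg (by omega), if_neg (by omega)]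
        · rw [hst]; simp only [istateT]; rw [if_neg (by omega)]

/-- Domination: every reachable state on input `M` is dominated by a canonical run. -/
lemma mu_dom (q : ℕ) : ∀ t, t ≤ q → ∀ s ∈ reach C t (initState C (fun _ => BM.metastable)),
    ∃ θ, θ ≤ q ∧ (θ = q ∨ θ < t) ∧ s.inp 0 = istateT (C.inType 0) θ t ∧
      vle (mu C θ t).loc s.loc ∧ vle (mu C θ t).out s.out := by
  intro t
  induction t with
  | zero =>
      intro _ s hs
      rw [reach] at hs
      subst hs
      exact ⟨q, le_rfl, Or.inl rfl, by rw [istateT_zero]; rfl, vle_refl _, vle_refl _⟩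
  | succ t ih =>
      rintro htq s ⟨u, hu, hsucc⟩
      obtain ⟨θ, hθq, hcase, hinp, hlocD, houtD⟩ := ih (by omega) u hu
      obtain ⟨o, ι', ⟨hin, hloc⟩, hι, hw⟩ := hsucc
      rw [inResM_iff_vle] at hw
      have hin0 := hin 0
      rw [hinp] at hin0
      obtain ⟨θ', hθ'q, hcase', hagreeθ, hx, hst⟩ := input_step hθq hcase htq hin0
      have hlocD' : vle (mu C θ' t).loc u.loc := by
        rcases hagreeθ with h | ⟨h1, h2⟩
        · rw [h]; exact hlocD
        · rw [mu_agree C h2 h1]; exact hlocD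
      have hovle : vle (muo C θ' t) o := by
        intro c
        refine Fin.addCases (fun i => ?_) (fun j => ?_) c
        · have hi : i = 0 := Subsingleton.elim _ _
          subst hi
          have h1 : muo C θ' t (Fin.castAdd k 0) = ireadT (C.inType 0) θ' t :=
            Fin.append_left _ _ 0
          rw [h1, ← hx]
          exact ble_refl _
        · have h1 : muo C θ' t (Fin.natAdd 1 j) = (mu C θ' t).loc j := Fin.append_right _ _ j
          rw [h1]
          obtain ⟨st', hst'⟩ := hloc j
          exact ble_trans (hlocD' j) (regRead_read_ble hst')
      have hev := evalLogic_mono C hovle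
      refine ⟨θ', hθ'q, hcase', ?_, ?_, ?_⟩
      · rw [hι]; exact hst
      · intro j
        have h1 := hw (Fin.castAdd r j)
        rw [append_loc_out_castAdd] at h1
        show ble ((mu C θ' (t+1)).loc j) (s.loc j)
        rw [mu_succ_loc]
        exact ble_trans (hev _) h1
      · intro j
        have h1 := hw (Fin.natAdd k j)
        rw [append_loc_out_natAdd] at h1
        show ble ((mu C θ' (t+1)).out j) (s.out j)
        rw [mu_succ_out]
        exact ble_trans (hev _) h1

/-- Pinning: if the input type masks to a stable value `v`, the never-destabilizing
canonical run is replayed exactly by the circuit on the stable input `v`. -/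
lemma mu_pin {q : ℕ} {v : BM}
    (hread : ∀ t, t < q → ireadT (C.inType 0) q t = v)
    (hstable : regRead (C.inType 0) v (v, v)) :
    ∀ t, t ≤ q →
      (⟨fun _ => v, (mu C q t).loc, (mu C q t).out⟩ : CState 1 k r) ∈
        reach C t (initState C (fun _ => v)) := by
  intro t
  induction t with
  | zero =>
      intro _
      show _ = initState C (fun _ => v)
      exact CState.ext' rfl rfl rfl
  | succ t ih =>
      intro htq
      refine ⟨_, ih (by omega), ?_⟩
      refine ⟨muo C q t, fun _ => v, ⟨?_, ?_⟩, rfl, ?_⟩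
      · intro i
        have hi : i = 0 := Subsingleton.elim _ _
        subst hi
        have h1 : muo C q t (Fin.castAdd k 0) = ireadT (C.inType 0) q t :=
          Fin.append_left _ _ 0
        rw [h1, hread t (by omega)]
        exact hstable
      · intro j
        have h1 : muo C q t (Fin.natAdd 1 j) = (mu C q t).loc j := Fin.append_right _ _ j
        rw [h1]
        exact regRead_self _ _
      · rw [inResM_iff_vle]
        intro c
        refine Fin.addCases (fun j => ?_) (fun j => ?_) c
        · rw [Fin.append_left]
          show ble _ ((mu C q (t+1)).loc j)
          rw [mu_succ_loc]
          exact ble_refl _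
        · rw [Fin.append_right]
          show ble _ ((mu C q (t+1)).out j)
          rw [mu_succ_out]
          exact ble_refl _

/-- Final-round resolution version of the pinning lemma. -/
lemma mu_pin_res {q : ℕ} (hq : 1 ≤ q) {v : BM}
    (hread : ∀ t, t < q → ireadT (C.inType 0) q t = v)
    (hstable : regRead (C.inType 0) v (v, v))
    {b : Fin r → BM} (hb : vle (mu C q q).out b) :
    b ∈ Cout C q (fun _ => v) := by
  obtain ⟨t, rfl⟩ : ∃ t, q = t + 1 := ⟨q - 1, by omega⟩
  refine ⟨⟨fun _ => v, (mu C (t+1) (t+1)).loc, b⟩, ?_, rfl⟩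
  refine ⟨_, mu_pin C hread hstable t (by omega), ?_⟩
  refine ⟨muo C (t+1) t, fun _ => v, ⟨?_, ?_⟩, rfl, ?_⟩
  · intro i
    have hi : i = 0 := Subsingleton.elim _ _
    subst hi
    have h1 : muo C (t+1) t (Fin.castAdd k 0) = ireadT (C.inType 0) (t+1) t :=
      Fin.append_left _ _ 0
    rw [h1, hread t (by omega)]
    exact hstable
  · intro j
    have h1 : muo C (t+1) t (Fin.natAdd 1 j) = (mu C (t+1) t).loc j := Fin.append_right _ _ j
    rw [h1]
    exact regRead_self _ _
  · rw [inResM_iff_vle]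
    intro c
    refine Fin.addCases (fun j => ?_) (fun j => ?_) c
    · rw [Fin.append_left]
      show ble _ ((mu C (t+1) (t+1)).loc j)
      rw [mu_succ_loc]
      exact ble_refl _
    · rw [Fin.append_right]
      exact ble_trans (by rw [mu_succ_out] at hb ⊢; exact ble_refl _) (hb j)

end MuRun


/-! ### The counting argument: `r-1` rounds do not suffice -/

def wt : BM → ℕ
  | BM.zero => 0
  | BM.metastable => 1
  | BM.one => 2

noncomputable def nu {r : ℕ} (y : Fin r → BM) : ℕ := ∑ j, wt (y j)

lemma wt_le_two (a : BM) : wt a ≤ 2 := by cases a <;> simp [wt]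

lemma nu_adjF {r : ℕ} {y y' : Fin r → BM} (h : adjF y y') :
    nu y ≤ nu y' + 1 ∧ nu y' ≤ nu y + 1 := by
  rcases h with h | ⟨j0, hoff, hm⟩
  · subst h; omega
  · have h1 : (∑ j ∈ Finset.univ.erase j0, wt (y j)) + wt (y j0) = nu y :=
      Finset.sum_erase_add _ _ (Finset.mem_univ j0)
    have h2 : (∑ j ∈ Finset.univ.erase j0, wt (y' j)) + wt (y' j0) = nu y' :=
      Finset.sum_erase_add _ _ (Finset.mem_univ j0)
    have he : (∑ j ∈ Finset.univ.erase j0, wt (y j)) =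
        ∑ j ∈ Finset.univ.erase j0, wt (y' j) :=
      Finset.sum_congr rfl (fun j hj => by rw [hoff j (Finset.ne_of_mem_erase hj)])
    have hw1 := wt_le_two (y j0)
    have hw2 := wt_le_two (y' j0)
    rcases hm with hm | hm
    · have : wt (y j0) = 1 := by rw [hm]; rfl
      omega
    · have : wt (y' j0) = 1 := by rw [hm]; rfl
      omega

lemma nu_even {r : ℕ} {y : Fin r → BM} (h : ∀ j, y j ≠ BM.metastable) : 2 ∣ nu y := by
  refine Finset.dvd_sum (fun j _ => ?_)
  cases hj : y j
  · simp [wt]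
  · simp [wt]
  · exact absurd hj (h j)

lemma conn_nu_ivt {r : ℕ} {S : Set (Fin r → BM)} {y0 y1 : Fin r → BM}
    (hp : Relation.ReflTransGen (fun a b => adjF a b ∧ a ∈ S ∧ b ∈ S) y0 y1)
    (hy0 : y0 ∈ S) :
    ∀ mm, nu y0 ≤ mm → mm ≤ nu y1 → ∃ y ∈ S, nu y = mm := by
  induction hp with
  | refl => intro mm h1 h2; exact ⟨y0, hy0, by omega⟩
  | @tail b c hab hbc ih =>
      intro mm h1 h2
      by_cases hm : mm ≤ nu b
      · exact ih mm h1 hm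
      · have := nu_adjF hbc.1
        exact ⟨c, hbc.2.2, by omega⟩

lemma fanoutWord_cases (r i : ℕ) (j : Fin r) :
    ((j : ℕ) < i ∧ fanoutWord r i j = BM.zero) ∨
    ((j : ℕ) = i ∧ fanoutWord r i j = BM.metastable) ∨
    (i < (j : ℕ) ∧ fanoutWord r i j = BM.one) := by
  unfold fanoutWord
  rcases Nat.lt_trichotomy (j : ℕ) i with h | h | h
  · exact Or.inl ⟨h, if_pos h⟩
  · refine Or.inr (Or.inl ⟨h, ?_⟩)
    rw [if_neg (by omega), if_pos h]
  · refine Or.inr (Or.inr ⟨h, ?_⟩)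
    rw [if_neg (by omega), if_neg (by omega)]

lemma fanout_no_inversion {r : ℕ} {y : Fin r → BM}
    (hy : ∃ i : Fin r, inResM (fanoutWord r (i : ℕ)) y)
    {a b : Fin r} (hab : (a : ℕ) < (b : ℕ)) : y a = BM.zero ∨ y b = BM.one := by
  obtain ⟨p, hp⟩ := hy
  by_cases hap : (a : ℕ) < (p : ℕ)
  · left
    rcases fanoutWord_cases r (p : ℕ) a with ⟨_, hw⟩ | ⟨h1, _⟩ | ⟨h1, _⟩
    · rcases hp a with h | h
      · rw [← h, hw]
      · rw [hw] at h; exact absurd h (by simp)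
    · omega
    · omega
  · right
    rcases fanoutWord_cases r (p : ℕ) b with ⟨h1, _⟩ | ⟨h1, _⟩ | ⟨_, hw⟩
    · omega
    · omega
    · rcases hp b with h | h
      · rw [← h, hw]
      · rw [hw] at h; exact absurd h (by simp)

lemma fanout_eval_meta {r : ℕ} {ι : Fin 1 → BM} (h : ι 0 = BM.metastable) :
    fanout r ι = { y | ∃ i : Fin r, inResM (fanoutWord r ((i : Fin r) : ℕ)) y } := by
  unfold fanout; rw [h]

lemma fanout_eval_zero {r : ℕ} {ι : Fin 1 → BM} (h : ι 0 = BM.zero) :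
    fanout r ι = {fun _ => BM.zero} := by
  unfold fanout; rw [h]

lemma fanout_eval_one {r : ℕ} {ι : Fin 1 → BM} (h : ι 0 = BM.one) :
    fanout r ι = {fun _ => BM.one} := by
  unfold fanout; rw [h]

lemma conn_out_path {k r : ℕ} {S : Set (CState 1 k r)} {O : Set (Fin r → BM)}
    (hO : ∀ u ∈ S, u.out ∈ O) {s s' : CState 1 k r} (h : conn S adjS s s') :
    Relation.ReflTransGen (fun a b => adjF a b ∧ a ∈ O ∧ b ∈ O) s.out s'.out := by
  induction h with
  | refl => exact Relation.ReflTransGen.refl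
  | @tail b c hab hbc ih =>
      refine Relation.ReflTransGen.tail ih ⟨?_, hO b hbc.2.1, hO c hbc.2.2⟩
      rcases hbc.1 with ⟨_, _, h3⟩ | ⟨_, _, h3⟩ | ⟨_, _, h3⟩
      · exact h3
      · rw [h3]; exact adjF_refl _
      · rw [h3]; exact adjF_refl _

lemma fanout_not_impl {r q k : ℕ} (hr : 2 ≤ r) (hqr : q + 1 ≤ r) (hq1 : 1 ≤ q)
    (C : Circuit 1 k r) (hC : Implements C q (fanout r)) : False := by
  classical
  obtain ⟨t, rfl⟩ : ∃ t, q = t + 1 := ⟨q - 1, by omega⟩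
  set ιM : Fin 1 → BM := fun _ => BM.metastable with hιM
  have hιM0 : ιM 0 = BM.metastable := rfl
  -- every reachable output lies in the fan-out set
  have hT : ∀ y ∈ Cout C (t+1) ιM, ∃ i : Fin r, inResM (fanoutWord r (i : ℕ)) y := by
    intro y hy
    have h := hC ιM hy
    rwa [fanout_eval_meta hιM0] at h
  -- resolutions of class outputs are reachable
  have hres : ∀ θ (b : Fin r → BM), vle (mu C θ (t+1)).out b → b ∈ Cout C (t+1) ιM :=
    fun θ b hb => ⟨_, mu_res_reach C θ t hb, rfl⟩
  -- each class output has at most one metastable coordinate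
  have hz1 : ∀ θ (a b : Fin r), (mu C θ (t+1)).out a = BM.metastable →
      (mu C θ (t+1)).out b = BM.metastable → a = b := by
    intro θ a b ha hb
    by_contra hne
    have key : ∀ a b : Fin r, (a : ℕ) < (b : ℕ) → (mu C θ (t+1)).out a = BM.metastable →
        (mu C θ (t+1)).out b = BM.metastable → False := by
      intro a b hab ha hb
      set bad : Fin r → BM := fun j => if j = a then BM.one else
        (if (mu C θ (t+1)).out j = BM.metastable then BM.zero else (mu C θ (t+1)).out j) with hbad
      have hble : vle (mu C θ (t+1)).out bad := by
        intro j
        by_cases hj : j = a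
        · subst hj; exact Or.inl ha
        · by_cases hm : (mu C θ (t+1)).out j = BM.metastable
          · exact Or.inl hm
          · refine Or.inr ?_
            show _ = if j = a then BM.one else
              (if (mu C θ (t+1)).out j = BM.metastable then BM.zero else (mu C θ (t+1)).out j)
            rw [if_neg hj, if_neg hm]
      have hmem := hT bad (hres θ bad hble)
      have hinv := fanout_no_inversion hmem hab
      have hba : bad a = BM.one := by
        show (if a = a then BM.one else _) = BM.one
        rw [if_pos rfl]
      have hbb : bad b = BM.zero := by
        show (if b = a then BM.one else
          (if (mu C θ (t+1)).out b = BM.metastable then BM.zero else (mu C θ (t+1)).out b)) = BM.zero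
        rw [if_neg (by intro hc; rw [hc] at hab; omega), if_pos hb]
      rcases hinv with h | h
      · rw [hba] at h; exact absurd h (by simp)
      · rw [hbb] at h; exact absurd h (by simp)
    rcases Nat.lt_trichotomy (a : ℕ) (b : ℕ) with h | h | h
    · exact key a b h ha hb
    · exact hne (Fin.ext h)
    · exact key b a h hb ha
  -- endpoints via simulation of the stable-input runs
  obtain ⟨u0, hu0⟩ := reach_nonempty C (t+1) (initState C (fun _ => BM.zero))
  have hu0out : u0.out = (fun _ => BM.zero) := by
    have h := hC (fun _ => BM.zero) ⟨u0, hu0, rfl⟩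
    rwa [fanout_eval_zero rfl] at h
  obtain ⟨s0, hs0, hsle0⟩ := reach_sim C
    (⟨fun i => ble_meta _, vle_refl _, vle_refl _⟩ :
      sle (initState C ιM) (initState C (fun _ => BM.zero))) (t+1) u0 hu0
  have hy0le : vle s0.out (fun _ => BM.zero) := by
    have h := hsle0.2.2
    rwa [hu0out] at h
  obtain ⟨u1, hu1⟩ := reach_nonempty C (t+1) (initState C (fun _ => BM.one))
  have hu1out : u1.out = (fun _ => BM.one) := by
    have h := hC (fun _ => BM.one) ⟨u1, hu1, rfl⟩
    rwa [fanout_eval_one rfl] at h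
  obtain ⟨s1, hs1, hsle1⟩ := reach_sim C
    (⟨fun i => ble_meta _, vle_refl _, vle_refl _⟩ :
      sle (initState C ιM) (initState C (fun _ => BM.one))) (t+1) u1 hu1
  have hy1le : vle s1.out (fun _ => BM.one) := by
    have h := hsle1.2.2
    rwa [hu1out] at h
  -- weight bounds on the endpoints
  have hnu0 : nu s0.out ≤ 1 := by
    obtain ⟨p, hp⟩ := hT s0.out ⟨s0, hs0, rfl⟩
    have hb : ∀ j : Fin r, wt (s0.out j) ≤ (if j = p then 1 else 0) := by
      intro j
      by_cases hj : j = p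
      · subst hj
        rw [if_pos rfl]
        rcases hy0le j with h | h
        · rw [h]; simp [wt]
        · rw [h]; simp [wt]
      · rw [if_neg hj]
        rcases fanoutWord_cases r (p : ℕ) j with ⟨_, hw⟩ | ⟨h1, _⟩ | ⟨_, hw⟩
        · rcases hp j with h | h
          · rw [← h, hw]; simp [wt]
          · rw [hw] at h; exact absurd h (by simp)
        · exact absurd (Fin.ext h1) hj
        · rcases hp j with h | h
          · exfalso
            have h2 : s0.out j = BM.one := by rw [← h, hw]
            rcases hy0le j with h3 | h3 <;> rw [h2] at h3 <;> exact absurd h3 (by simp)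
          · rw [hw] at h; exact absurd h (by simp)
    calc nu s0.out ≤ ∑ j, (if j = p then 1 else 0) := Finset.sum_le_sum (fun j _ => hb j)
    _ = 1 := by simp
  have hnu1 : 2 * r ≤ nu s1.out + 1 := by
    obtain ⟨p, hp⟩ := hT s1.out ⟨s1, hs1, rfl⟩
    have hb : ∀ j : Fin r, 2 ≤ wt (s1.out j) + (if j = p then 1 else 0) := by
      intro j
      by_cases hj : j = p
      · subst hj
        rw [if_pos rfl]
        rcases hy1le j with h | h
        · rw [h]; simp [wt]
        · rw [h]; simp [wt]
      · rw [if_neg hj]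
        rcases fanoutWord_cases r (p : ℕ) j with ⟨_, hw⟩ | ⟨h1, _⟩ | ⟨_, hw⟩
        · rcases hp j with h | h
          · exfalso
            rcases hy1le j with h2 | h2 <;> rw [← h, hw] at h2 <;>
              exact absurd h2 (by simp)
          · rw [hw] at h; exact absurd h (by simp)
        · exact absurd (Fin.ext h1) hj
        · rcases hp j with h | h
          · rw [← h, hw]; simp [wt]
          · rw [hw] at h; exact absurd h (by simp)
    have hsum : ∑ j : Fin r, 2 ≤ ∑ j : Fin r, (wt (s1.out j) + (if j = p then 1 else 0)) :=
      Finset.sum_le_sum (fun j _ => hb j)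
    rw [Finset.sum_add_distrib] at hsum
    have h1 : (∑ j : Fin r, (2 : ℕ)) = 2 * r := by
      simp [Finset.sum_const, Finset.card_univ, mul_comm]
    have h2 : (∑ j : Fin r, (if j = p then 1 else 0)) = 1 := by simp
    rw [h1, h2] at hsum
    exact hsum
  -- connectivity of the output set
  have hpath : Relation.ReflTransGen
      (fun a b => adjF a b ∧ a ∈ Cout C (t+1) ιM ∧ b ∈ Cout C (t+1) ιM)
      s0.out s1.out :=
    conn_out_path (O := Cout C (t+1) ιM) (fun u hu => ⟨u, hu, rfl⟩)
      (reach_conn C (initState C ιM) (t+1) s0 hs0 s1 hs1)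
  -- extract all odd-weight words
  have hodd : ∀ c : Fin r, ∃ y ∈ Cout C (t+1) ιM, nu y = 2*(c : ℕ)+1 := by
    intro c
    refine conn_nu_ivt hpath ⟨s0, hs0, rfl⟩ _ (by omega) ?_
    have := c.isLt
    omega
  choose y hymem hynu using hodd
  have hyM : ∀ c, ∃ p0 : Fin r, y c p0 = BM.metastable := by
    intro c
    by_contra hc
    push_neg at hc
    have := nu_even hc
    rw [hynu] at this
    omega
  -- assign classes
  have hdom : ∀ c : Fin r, ∃ θ, θ ≤ t+1 ∧ (mu C θ (t+1)).out = y c := by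
    intro c
    obtain ⟨s, hs, hsout⟩ := hymem c
    obtain ⟨θ, hθq, _, _, _, houtD⟩ := mu_dom C (t+1) (t+1) le_rfl s hs
    refine ⟨θ, hθq, ?_⟩
    obtain ⟨p0, hp0⟩ := hyM c
    have hvle : vle (mu C θ (t+1)).out (y c) := by rw [hsout]; exact houtD
    have hzp0 : (mu C θ (t+1)).out p0 = BM.metastable := by
      rcases hvle p0 with h | h
      · exact h
      · rw [h]; exact hp0
    funext j
    by_cases hj : j = p0
    · subst hj; rw [hzp0, hp0]
    · rcases hvle j with h | h
      · exact absurd (hz1 θ j p0 h hzp0) hj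
      · exact h
  choose θf hθfq hθfz using hdom
  have hinj : Function.Injective θf := by
    intro c c' h
    have hyy : y c = y c' := by rw [← hθfz c, ← hθfz c', h]
    have hnn := congrArg nu hyy
    rw [hynu, hynu] at hnn
    exact Fin.ext (by omega)
  -- case analysis on the input register type
  cases hτ : C.inType 0 with
  | simple =>
      have h01 : y ⟨0, by omega⟩ = y ⟨1, by omega⟩ := by
        rw [← hθfz ⟨0, by omega⟩, ← hθfz ⟨1, by omega⟩,
          mu_simple_agree C hτ (θf ⟨0, by omega⟩) (θf ⟨1, by omega⟩) (t+1)]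
      have hnn := congrArg nu h01
      rw [hynu, hynu] at hnn
      simp at hnn
  | mask0 =>
      have hzq : (mu C (t+1) (t+1)).out = fun _ => BM.zero := by
        have hmem := mu_pin_res C (by omega) (v := BM.zero)
          (fun u hu => by rw [hτ]; simp [ireadT, hu]) (by rw [hτ]; rfl)
          (vle_refl (mu C (t+1) (t+1)).out)
        have h2 := hC (fun _ => BM.zero) hmem
        rwa [fanout_eval_zero rfl] at h2
      have hne : ∀ c, θf c ≠ t+1 := by
        intro c hcq
        obtain ⟨p0, hp0⟩ := hyM c
        rw [← hθfz c, hcq, hzq] at hp0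
        exact absurd hp0 (by simp)
      have hcard : r ≤ t+1 := by
        have hcard2 := Fintype.card_le_of_injective
          (fun c : Fin r => (⟨θf c, by have := hθfq c; have := hne c; omega⟩ : Fin (t+1)))
          (fun c c' h => hinj (congrArg Fin.val h))
        simpa using hcard2
      omega
  | mask1 =>
      have hzq : (mu C (t+1) (t+1)).out = fun _ => BM.one := by
        have hmem := mu_pin_res C (by omega) (v := BM.one)
          (fun u hu => by rw [hτ]; simp [ireadT, hu]) (by rw [hτ]; rfl)
          (vle_refl (mu C (t+1) (t+1)).out)
        have h2 := hC (fun _ => BM.one) hmem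
        rwa [fanout_eval_one rfl] at h2
      have hne : ∀ c, θf c ≠ t+1 := by
        intro c hcq
        obtain ⟨p0, hp0⟩ := hyM c
        rw [← hθfz c, hcq, hzq] at hp0
        exact absurd hp0 (by simp)
      have hcard : r ≤ t+1 := by
        have hcard2 := Fintype.card_le_of_injective
          (fun c : Fin r => (⟨θf c, by have := hθfq c; have := hne c; omega⟩ : Fin (t+1)))
          (fun c c' h => hinj (congrArg Fin.val h))
        simpa using hcard2
      omega

lemma fanout_not_FunM {r : ℕ} (hr : 2 ≤ r) : fanout r ∉ FunM (r - 1) 1 r := by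
  rintro ⟨k, C, hC⟩
  exact fanout_not_impl hr (by omega) (by omega) C hC

/-- with masking registers each additional round strictly increases
computational power: `Fun_M^r ⊊ Fun_M^{r+1}` for every `r ∈ ℕ`; in particular, for
`r ≥ 2` the fan-out `f` satisfies `f ∈ Fun_M^r` and `f ∉ Fun_M^{r-1}`. -/
theorem funM_hierarchy_strict :
    (∀ r : ℕ, 0 < r → FunMAll r ⊂ FunMAll (r + 1)) ∧
    (∀ r : ℕ, 2 ≤ r → fanout r ∈ FunM r 1 r ∧ fanout r ∉ FunM (r - 1) 1 r) := by
  constructor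
  · intro r hr
    rw [Set.ssubset_def]
    refine ⟨funMAll_mono r (by omega), ?_⟩
    intro hsub
    have hmem : (⟨1, r+1, fanout (r+1)⟩ :
        (m : ℕ) × (n : ℕ) × ((Fin m → BM) → Set (Fin n → BM))) ∈ FunMAll (r+1) := by
      obtain ⟨k, C, hC⟩ := fanout_mem_FunM (r := r+1) (by omega)
      exact ⟨k, C, hC⟩
    obtain ⟨k, C, hC⟩ := hsub hmem
    exact fanout_not_FunM (r := r+1) (by omega) ⟨k, C, hC⟩
  · intro r hr
    exact ⟨fanout_mem_FunM (by omega), fanout_not_FunM hr⟩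
end

section
/- For every Boolean function f : B^m → B^n, its metastable closure [f]_M is natural (bit-wise, closed, and specific), and hence [f]_M ∈ Fun_S, i.e., [f]_M is implementable by a circuit with only simple registers. -/
set_option linter.unusedVariables false

attribute [local instance] Classical.propDecidable

lemma boolRes_mono {k : ℕ} {x y : Fin k → BM} (h : inRes x y) :
    boolRes y ⊆ boolRes x := by
  intro z hz i
  rcases hz i with h1 | h1
  · rcases h.1 i with h2 | h2
    · left; rw [h2, h1]
    · right; exact h2
  · exact absurd h1 (h.2 i)

lemma kleene_mem_mclosureC {m n : ℕ} (f : (Fin m → Bool) → Fin n → Bool)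
    (x : Fin m → BM) (j : Fin n) :
    kleene (fun z => f z j) x ∈ mclosureC f x j := by
  unfold kleene mclosureC
  split_ifs <;> simp

lemma kleene_meta_univ {m n : ℕ} (f : (Fin m → Bool) → Fin n → Bool)
    (x : Fin m → BM) (j : Fin n)
    (h : kleene (fun z => f z j) x = BM.metastable) :
    mclosureC f x j = Set.univ := by
  unfold kleene at h
  unfold mclosureC
  split_ifs at h ⊢ with h1 h2 <;> simp_all

/-- The trivial one-round circuit implementing the metastable closure. -/
noncomputable def mclCirc {m n : ℕ} (f : (Fin m → Bool) → Fin n → Bool) :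
    Circuit m 0 n where
  inType := fun _ => RegType.simple
  locType := fun _ => RegType.simple
  outType := fun _ => RegType.simple
  logic := fun j => Comb.gate m (fun z => f z (Fin.cast (Nat.zero_add n) j))
      (fun t => Comb.input (Fin.castAdd 0 t))
  init := fun _ => BM.zero

/-- for every Boolean function `f : B^m → B^n`, its metastable closure
`[f]_M` is natural, and hence `[f]_M ∈ Fun_S`. -/
theorem mclosure_natural_and_implementable {m n : ℕ}
    (f : (Fin m → Bool) → Fin n → Bool) :
    IsNatural (mclosure f) ∧ mclosure f ∈ FunS 1 m n := by
  constructor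
  · constructor
    · refine ⟨fun i x => mclosureC f x i, ?_, fun x => rfl⟩
      intro i x
      unfold mclosureC
      dsimp only
      split_ifs with h1 h2
      · exact Or.inl rfl
      · exact Or.inr (Or.inl rfl)
      · exact Or.inr (Or.inr rfl)
    · intro x y hxy w hw i
      have hsub := boolRes_mono hxy
      have hz0 : (fun j => y j == BM.one) ∈ boolRes y := by
        intro j
        left
        cases hj : y j
        · simp only [hj]; rfl
        · simp only [hj]; rfl
        · exact absurd hj (hxy.2 j)
      have := hw i
      unfold mclosureC at this ⊢
      split_ifs with h1 h2
      · rwa [if_pos (fun z hz => h1 z (hsub hz))] at this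
      · rw [if_neg, if_pos (fun z hz => h2 z (hsub hz))] at this
        · exact this
        · intro hall
          have h1' := hall _ hz0
          have h2' := h2 _ (hsub hz0)
          simp [h1'] at h2'
      · trivial
  · refine ⟨0, mclCirc f, ⟨fun _ => rfl, fun _ => rfl, fun _ => rfl⟩, ?_⟩
    intro ι y hy
    obtain ⟨s, hs, hyeq⟩ := hy
    obtain ⟨u, hu, hsucc⟩ := hs
    have hu' : u = initState (mclCirc f) ι := hu
    subst hu'
    obtain ⟨o, ι', ⟨hrd, _⟩, _, hres⟩ := hsucc
    -- read values of inputs equal ι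
    have ho : ∀ i : Fin m, o (Fin.castAdd 0 i) = ι i := by
      intro i
      have h := hrd i
      simp only [mclCirc, initState] at h
      cases hι : ι i <;> rw [hι] at h <;>
        simpa [regRead] using congrArg Prod.fst h
    have hov : (fun t : Fin m => o (Fin.castAdd 0 t)) = ι := funext ho
    subst hyeq
    intro j
    have hcast : Fin.cast (Nat.zero_add n) (Fin.natAdd 0 j) = j := by
      apply Fin.ext; simp
    have heval : evalLogic (mclCirc f) o (Fin.natAdd 0 j)
        = kleene (fun z => f z j) ι := by
      simp only [evalLogic, mclCirc, Comb.eval, hcast, hov]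
    have hr := hres (Fin.natAdd 0 j)
    rw [heval, Fin.append_right] at hr
    rcases hr with hr | hr
    · rw [← hr]
      exact kleene_mem_mclosureC f ι j
    · rw [kleene_meta_univ f ι j hr]
      trivial
end
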